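/- arXiv:1112.0383 — 3 statements merged into one kernel-verified Lean document; each statement's English description precedes it below -/
import Mathlib

section
/- For any set of N unit vectors {v_1,…,v_N} in C^n and any integer k ≥ 1, Σ_{i=1}^N Σ_{j=1}^N |⟨v_i, v_j⟩|^{2k} ≥ N² / C(n+k−1,k), where C(n+k−1,k) is the binomial coefficient. -/
open Complex Finset

-- symmetrization of a function
def symOf {n k : ℕ} (f : Fin k → Fin n) : Sym (Fin n) k :=
  ⟨Multiset.map f Finset.univ.val, by simp⟩

noncomputable def symCnt (n k : ℕ) (m : Sym (Fin n) k) : ℕ :=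
  (Finset.univ.filter (fun f : Fin k → Fin n => symOf f = m)).card

noncomputable def Wt {n : ℕ} (k : ℕ) (x : Fin n → ℂ) (m : Sym (Fin n) k) : ℂ :=
  (Real.sqrt (symCnt n k m) : ℂ) * ((m : Multiset (Fin n)).map x).prod

lemma tensor_inner (n k : ℕ) (x y : Fin n → ℂ) :
    ∑ m : Sym (Fin n) k, Wt k x m * (starRingEnd ℂ) (Wt k y m)
      = (∑ t, x t * (starRingEnd ℂ) (y t)) ^ k := by
  set g : Fin n → ℂ := fun t => x t * (starRingEnd ℂ) (y t) with hg
  have hRHS : (∑ t, g t) ^ k = ∑ f : Fin k → Fin n, ∏ l, g (f l) := by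
    rw [Finset.sum_pow' Finset.univ g k]
    rw [Fintype.piFinset_univ]
  have hfib : ∑ f : Fin k → Fin n, ∏ l, g (f l)
      = ∑ m : Sym (Fin n) k, ∑ f ∈ Finset.univ.filter (fun f => symOf f = m), ∏ l, g (f l) :=
    (Finset.sum_fiberwise Finset.univ symOf _).symm
  have hterm : ∀ (m : Sym (Fin n) k), ∀ f ∈ Finset.univ.filter (fun f => symOf f = m),
      (∏ l, g (f l)) = ((m : Multiset (Fin n)).map g).prod := by
    intro m f hf
    rw [Finset.mem_filter] at hf
    rw [← hf.2]
    show ∏ l ∈ Finset.univ, g (f l) = _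
    rw [Finset.prod, symOf]
    show (Multiset.map (fun l => g (f l)) Finset.univ.val).prod
      = (Multiset.map g (Multiset.map f Finset.univ.val)).prod
    rw [Multiset.map_map]
    rfl
  have hLHS : ∀ m : Sym (Fin n) k, Wt k x m * (starRingEnd ℂ) (Wt k y m)
      = (symCnt n k m : ℂ) * ((m : Multiset (Fin n)).map g).prod := by
    intro m
    rw [Wt, Wt, map_mul, Complex.conj_ofReal]
    have h1 : ((Real.sqrt (symCnt n k m) : ℂ)) * _root_.Complex.ofReal (Real.sqrt (symCnt n k m)) = ((symCnt n k m : ℕ) : ℂ) := by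
      rw [← Complex.ofReal_mul, Real.mul_self_sqrt (Nat.cast_nonneg _)]
      norm_cast
    have h2 : (starRingEnd ℂ) ((m : Multiset (Fin n)).map y).prod
        = ((m : Multiset (Fin n)).map (fun t => (starRingEnd ℂ) (y t))).prod := by
      rw [map_multiset_prod, Multiset.map_map]; rfl
    calc (Real.sqrt (symCnt n k m) : ℂ) * ((m : Multiset (Fin n)).map x).prod *
          ((Real.sqrt (symCnt n k m) : ℂ) * (starRingEnd ℂ) ((m : Multiset (Fin n)).map y).prod)
        = ((Real.sqrt (symCnt n k m) : ℂ) * (Real.sqrt (symCnt n k m) : ℂ)) *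
          (((m : Multiset (Fin n)).map x).prod * ((m : Multiset (Fin n)).map (fun t => (starRingEnd ℂ) (y t))).prod) := by
          rw [h2]; try ring
      _ = (symCnt n k m : ℂ) * ((m : Multiset (Fin n)).map g).prod := by
          rw [h1, ← Multiset.prod_map_mul]
  rw [hRHS, hfib]
  refine Finset.sum_congr rfl fun m _ => ?_
  rw [hLHS m, Finset.sum_congr rfl (hterm m), Finset.sum_const, symCnt, nsmul_eq_mul]

lemma welch_base {ι α : Type*} [Fintype ι] [Fintype α] (u : ι → α → ℂ)
    (hu : ∀ i, ∑ a, Complex.normSq (u i a) = 1) :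
    (Fintype.card ι : ℝ) ^ 2 / (Fintype.card α : ℝ) ≤
      ∑ i, ∑ j, Complex.normSq (∑ a, u i a * (starRingEnd ℂ) (u j a)) := by
  rcases isEmpty_or_nonempty ι with hι | hι
  · simp
    try positivity
  rcases isEmpty_or_nonempty α with hα | hα
  · exfalso; have := hu (Classical.arbitrary ι); simp at this
  set S : α → α → ℂ := fun a b => ∑ i, u i a * (starRingEnd ℂ) (u i b) with hS
  set T : ι → ι → ℂ := fun i j => ∑ a, u i a * (starRingEnd ℂ) (u j a) with hT
  have key : ∑ a, ∑ b, S a b * (starRingEnd ℂ) (S a b)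
      = ∑ i, ∑ j, T i j * (starRingEnd ℂ) (T i j) := by
    have h1 : ∀ a b, S a b * (starRingEnd ℂ) (S a b)
        = ∑ i, ∑ j, (u i a * (starRingEnd ℂ) (u j a)) * ((starRingEnd ℂ) (u i b) * u j b) := by
      intro a b
      rw [hS]
      simp only [map_sum, map_mul, Complex.conj_conj, RingHom.id_apply]
      rw [Finset.sum_mul_sum]
      exact Finset.sum_congr rfl fun i _ => Finset.sum_congr rfl fun j _ => by ring
    have h2 : ∀ i j, T i j * (starRingEnd ℂ) (T i j)
        = ∑ a, ∑ b, (u i a * (starRingEnd ℂ) (u j a)) * ((starRingEnd ℂ) (u i b) * u j b) := by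
      intro i j
      rw [hT]
      simp only [map_sum, map_mul, Complex.conj_conj, RingHom.id_apply]
      rw [Finset.sum_mul_sum]
    simp_rw [h1, h2]
    calc ∑ a : α, ∑ b : α, ∑ i : ι, ∑ j : ι, (u i a * (starRingEnd ℂ) (u j a)) * ((starRingEnd ℂ) (u i b) * u j b)
        = ∑ a : α, ∑ i : ι, ∑ b : α, ∑ j : ι, (u i a * (starRingEnd ℂ) (u j a)) * ((starRingEnd ℂ) (u i b) * u j b) :=
          Finset.sum_congr rfl fun a _ => Finset.sum_comm
      _ = ∑ i : ι, ∑ a : α, ∑ b : α, ∑ j : ι, (u i a * (starRingEnd ℂ) (u j a)) * ((starRingEnd ℂ) (u i b) * u j b) :=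
          Finset.sum_comm
      _ = ∑ i : ι, ∑ a : α, ∑ j : ι, ∑ b : α, (u i a * (starRingEnd ℂ) (u j a)) * ((starRingEnd ℂ) (u i b) * u j b) :=
          Finset.sum_congr rfl fun i _ => Finset.sum_congr rfl fun a _ => Finset.sum_comm
      _ = ∑ i : ι, ∑ j : ι, ∑ a : α, ∑ b : α, (u i a * (starRingEnd ℂ) (u j a)) * ((starRingEnd ℂ) (u i b) * u j b) :=
          Finset.sum_congr rfl fun i _ => Finset.sum_comm
  have keyR : ∑ a, ∑ b, Complex.normSq (S a b) = ∑ i, ∑ j, Complex.normSq (T i j) := by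
    have := key
    simp_rw [Complex.mul_conj] at this
    exact_mod_cast this
  set r : α → ℝ := fun a => ∑ i, Complex.normSq (u i a) with hr
  have hdiag : ∀ a, S a a = ((r a : ℝ) : ℂ) := by
    intro a
    rw [hS, hr]
    push_cast
    exact Finset.sum_congr rfl fun i _ => (Complex.mul_conj _)
  have hrsum : ∑ a, r a = (Fintype.card ι : ℝ) := by
    rw [hr, Finset.sum_comm]
    simp [hu]
  have hstep1 : (Fintype.card ι : ℝ) ^ 2 ≤ (Fintype.card α : ℝ) * ∑ a, (r a) ^ 2 := by
    rw [← hrsum]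
    have := sq_sum_le_card_mul_sum_sq (s := (Finset.univ : Finset α)) (f := r)
    simpa using this
  have hstep2 : ∑ a, (r a) ^ 2 ≤ ∑ a, ∑ b, Complex.normSq (S a b) := by
    apply Finset.sum_le_sum
    intro a _
    have h1 : (r a) ^ 2 = Complex.normSq (S a a) := by
      rw [hdiag a, Complex.normSq_ofReal]; ring
    rw [h1]
    exact Finset.single_le_sum (fun b _ => Complex.normSq_nonneg _) (Finset.mem_univ a)
  have hcard : (0 : ℝ) < (Fintype.card α : ℝ) := by
    exact_mod_cast Fintype.card_pos
  rw [div_le_iff₀ hcard]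
  calc (Fintype.card ι : ℝ) ^ 2 ≤ (Fintype.card α : ℝ) * ∑ a, (r a) ^ 2 := hstep1
    _ ≤ (Fintype.card α : ℝ) * ∑ a, ∑ b, Complex.normSq (S a b) :=
        mul_le_mul_of_nonneg_left hstep2 (le_of_lt hcard)
    _ = (∑ i, ∑ j, Complex.normSq (T i j)) * (Fintype.card α : ℝ) := by rw [keyR]; ring
noncomputable def inn (n : ℕ) [NeZero n] (φ ψ : ZMod n → ℂ) : ℂ :=
  ∑ t : ZMod n, φ t * (starRingEnd ℂ) (ψ t)

noncomputable def ML (n : ℕ) [NeZero n] (w τ : ZMod n) (ψ : ZMod n → ℂ) : ZMod n → ℂ :=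
  fun t => Complex.exp (2 * Real.pi * Complex.I * ((w.val * t.val : ℕ) : ℝ) / n) * ψ (t + τ)

noncomputable def Lsh (n : ℕ) [NeZero n] (τ : ZMod n) (ψ : ZMod n → ℂ) : ZMod n → ℂ :=
  fun t => ψ (t + τ)

noncomputable def Msh (n : ℕ) [NeZero n] (w : ZMod n) (ψ : ZMod n → ℂ) : ZMod n → ℂ :=
  fun t => Complex.exp (2 * Real.pi * Complex.I * ((w.val * t.val : ℕ) : ℝ) / n) * ψ t

def IsUnitSignal (n : ℕ) [NeZero n] (φ : ZMod n → ℂ) : Prop :=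
  ∑ t : ZMod n, ‖φ t‖ ^ 2 = 1

theorem stmt_7 (n N k : ℕ) (hk : 1 ≤ k) (v : Fin N → Fin n → ℂ)
    (hunit : ∀ i, ∑ t, ‖v i t‖ ^ 2 = 1) :
    (N : ℝ) ^ 2 / ((n + k - 1).choose k : ℝ) ≤
      ∑ i : Fin N, ∑ j : Fin N,
        ‖∑ t, v i t * (starRingEnd ℂ) (v j t)‖ ^ (2 * k) := by
  rcases Nat.eq_zero_or_pos N with hN | hN
  · subst hN
    simp
  have i0 : Fin N := ⟨0, hN⟩
  have hcard : Fintype.card (Sym (Fin n) k) = (n + k - 1).choose k := by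
    rw [Sym.card_sym_eq_choose, Fintype.card_fin]
  have hT : ∀ i j, (∑ m : Sym (Fin n) k, Wt k (v i) m * (starRingEnd ℂ) (Wt k (v j) m))
      = (∑ t, v i t * (starRingEnd ℂ) (v j t)) ^ k := fun i j => tensor_inner n k (v i) (v j)
  have hnorm : ∀ i, ∑ m : Sym (Fin n) k, Complex.normSq (Wt k (v i) m) = 1 := by
    intro i
    have h1 : (∑ t, v i t * (starRingEnd ℂ) (v i t)) = 1 := by
      have he : ∀ t, v i t * (starRingEnd ℂ) (v i t) = ((‖v i t‖ ^ 2 : ℝ) : ℂ) := by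
        intro t; rw [Complex.mul_conj, Complex.sq_norm]
      rw [Finset.sum_congr rfl fun t _ => he t, ← Complex.ofReal_sum, hunit i, Complex.ofReal_one]
    have h2 := hT i i
    rw [h1, one_pow] at h2
    have h3 : (((∑ m : Sym (Fin n) k, Complex.normSq (Wt k (v i) m)) : ℝ) : ℂ) = 1 := by
      rw [Complex.ofReal_sum, ← h2]
      exact Finset.sum_congr rfl fun m _ => (Complex.mul_conj _).symm
    exact_mod_cast h3
  have main := welch_base (fun i => Wt k (v i)) hnorm
  rw [Fintype.card_fin, hcard] at main
  refine main.trans (le_of_eq (Finset.sum_congr rfl fun i _ =>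
    Finset.sum_congr rfl fun j _ => ?_))
  rw [hT i j, ← Complex.sq_norm, norm_pow, ← pow_mul, Nat.mul_comm]
end

section
/- Let p be prime, q = p^l, n = q − 1, T : F_q → F_p the trace map, γ a primitive element of F_q, and define the unit signal φ on Z_n by φ(i) = (1/√n) ζ_p^{T(γ^i)} where ζ_p = e^{2πi/p}. Then for all (w,τ) ∈ Z_n² with (w,τ) ≠ (0,0): |⟨φ, M_w L_τ φ⟩| ≤ √(n+1)/n; and moreover λ_{φ} := max over such (w,τ) equals √(n+1)/n when n ≥ 2. -/
open Complex Finset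

-- auxiliary
lemma conj_exp_aux (m : ℕ) :
    (starRingEnd ℂ) (Complex.exp (2 * Real.pi * Complex.I / m)) =
      (Complex.exp (2 * Real.pi * Complex.I / m))⁻¹ := by
  rw [← Complex.exp_conj, ← Complex.exp_neg]
  congr 1
  simp only [map_div₀, map_mul, Complex.conj_I, Complex.conj_ofReal, map_ofNat, map_natCast]
  ring

theorem stmt_9 (p l n : ℕ) [Fact p.Prime] [NeZero n] (hl : 0 < l)
    (F : Type) [Field F] [Fintype F] (hcard : Fintype.card F = p ^ l)
    [Algebra (ZMod p) F] (hn : n = p ^ l - 1)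
    (γ : Fˣ) (hγ : ∀ x : Fˣ, x ∈ Subgroup.zpowers γ)
    (φ : ZMod n → ℂ)
    (hφ : ∀ i : ZMod n, φ i = (1 / Real.sqrt n) *
      Complex.exp (2 * Real.pi * Complex.I *
        (((Algebra.trace (ZMod p) F ((γ : F) ^ i.val)).val : ℝ)) / p)) :
    (∀ w τ : ZMod n, (w, τ) ≠ (0, 0) →
      ‖inn n φ (ML n w τ φ)‖ ≤ Real.sqrt ((n : ℝ) + 1) / n) ∧
    (2 ≤ n → IsGreatest {r : ℝ | ∃ w τ : ZMod n, (w, τ) ≠ (0, 0) ∧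
      r = ‖inn n φ (ML n w τ φ)‖} (Real.sqrt ((n : ℝ) + 1) / n)) := by
  classical
  have hp : p.Prime := Fact.out
  have hn0 : 0 < n := Nat.pos_of_ne_zero (NeZero.ne n)
  have hplpos : 1 ≤ p ^ l := Nat.one_le_pow _ _ hp.pos
  have hnn : n + 1 = p ^ l := by omega
  -- order of γ
  have hcardU : Fintype.card Fˣ = n := by
    rw [Fintype.card_units, hcard, ← hn]
  have hord : orderOf γ = n := by
    rw [orderOf_eq_card_of_forall_mem_zpowers hγ, Nat.card_eq_fintype_card, hcardU]
  have hγn : (γ : F) ^ n = 1 := by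
    have h1 : γ ^ n = 1 := by rw [← hord]; exact pow_orderOf_eq_one γ
    simpa using congrArg Units.val h1
  have hγpow_ne : ∀ m : ZMod n, m ≠ 0 → (γ : F) ^ m.val ≠ 1 := by
    intro m hm h1
    have h1' : γ ^ m.val = 1 := Units.ext h1
    have hdvd := orderOf_dvd_of_pow_eq_one h1'
    rw [hord] at hdvd
    have hv : m.val < n := ZMod.val_lt m
    have hv0 : m.val ≠ 0 := fun h => hm (by rwa [← ZMod.val_eq_zero])
    have := Nat.le_of_dvd (Nat.pos_of_ne_zero hv0) hdvd
    omega
  have hγadd : ∀ a b : ZMod n, (γ : F) ^ (a + b).val = (γ : F) ^ a.val * (γ : F) ^ b.val := by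
    intro a b
    rw [ZMod.val_add, ← pow_add]
    exact (pow_eq_pow_mod _ hγn).symm
  -- roots of unity
  have hζpp : Complex.exp (2 * Real.pi * Complex.I / p) ^ p = 1 := by
    rw [← Complex.exp_nat_mul, mul_div_cancel₀ _ (by exact_mod_cast hp.ne_zero : (p:ℂ) ≠ 0),
      Complex.exp_two_pi_mul_I]
  have hζnn : Complex.exp (2 * Real.pi * Complex.I / n) ^ n = 1 := by
    rw [← Complex.exp_nat_mul, mul_div_cancel₀ _ (by exact_mod_cast hn0.ne' : (n:ℂ) ≠ 0),
      Complex.exp_two_pi_mul_I]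
  have hζn_prim : IsPrimitiveRoot (Complex.exp (2 * Real.pi * Complex.I / n)) n :=
    Complex.isPrimitiveRoot_exp n hn0.ne'
  set T := Algebra.trace (ZMod p) F with hT
  set ψ : AddChar F ℂ := (AddChar.zmodChar p hζpp).compAddMonoidHom T.toAddMonoidHom with hψdef
  have hψ_apply : ∀ x : F, ψ x = Complex.exp (2 * Real.pi * Complex.I / p) ^ (T x).val :=
    fun x => rfl
  set en : AddChar (ZMod n) ℂ := AddChar.zmodChar n hζnn with hendef
  have hen_apply : ∀ a : ZMod n, en a = Complex.exp (2 * Real.pi * Complex.I / n) ^ a.val :=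
    fun a => rfl
  have hen_prim : en.IsPrimitive := AddChar.zmodChar_primitive_of_primitive_root n hζn_prim
  have henz : ∀ a : ZMod n, en a ≠ 0 := fun a =>
    by rw [hen_apply]; exact pow_ne_zero _ (Complex.exp_ne_zero _)
  -- exp ↔ char
  have hexp : ∀ (m v : ℕ), Complex.exp (2 * Real.pi * Complex.I * (v : ℝ) / m) =
      Complex.exp (2 * Real.pi * Complex.I / m) ^ v := by
    intro m v
    rw [← Complex.exp_nat_mul]
    congr 1
    push_cast
    ring
  have hφ' : ∀ i : ZMod n, φ i = (1 / (Real.sqrt n : ℂ)) * ψ ((γ : F) ^ i.val) := by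
    intro i
    rw [hφ i, hψ_apply, ← hexp]
  have hME : ∀ w t : ZMod n,
      Complex.exp (2 * Real.pi * Complex.I * ((w.val * t.val : ℕ) : ℝ) / n) = en (w * t) := by
    intro w t
    rw [hexp n]
    have h1 : ((w.val * t.val : ℕ) : ZMod n) = w * t := by
      push_cast [ZMod.natCast_zmod_val]
      ring
    rw [← h1, AddChar.zmodChar_apply' hζnn]
  -- conjugation
  have hψconj : ∀ x : F, (starRingEnd ℂ) (ψ x) = (ψ x)⁻¹ := by
    intro x
    rw [hψ_apply, map_pow, conj_exp_aux, inv_pow]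
  have henconj : ∀ a : ZMod n, (starRingEnd ℂ) (en a) = (en a)⁻¹ := by
    intro a
    rw [hen_apply, map_pow, conj_exp_aux, inv_pow]
  -- nontriviality of ψ
  have hψne1 : ψ ≠ 1 := by
    have hTsurj : Function.Surjective T := Algebra.trace_surjective (ZMod p) F
    obtain ⟨a, ha⟩ := hTsurj 1
    rw [AddChar.ne_one_iff]
    refine ⟨a, ?_⟩
    rw [hψ_apply, ha, ZMod.val_one _, pow_one]
    exact (Complex.isPrimitiveRoot_exp p hp.ne_zero).ne_one hp.one_lt
  -- sums of characters
  have hzsum : ∀ a : ZMod n, a ≠ 0 → ∑ t : ZMod n, en (t * a) = 0 := by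
    intro a ha
    have h := AddChar.sum_mulShift a hen_prim
    rw [if_neg ha] at h
    exact_mod_cast h
  have hzsum' : ∀ w : ZMod n, w ≠ 0 → ∑ t : ZMod n, (en (w * t))⁻¹ = 0 := by
    intro w hw
    have h := hzsum (-w) (neg_ne_zero.mpr hw)
    rw [← h]
    refine Finset.sum_congr rfl fun t _ => ?_
    rw [← AddChar.map_neg_eq_inv]
    congr 1
    ring
  have hFsum : ∑ x : F, ψ x = 0 := AddChar.sum_eq_zero_of_ne_one hψne1
  have husum : ∑ u : Fˣ, ψ (u : F) = -1 := by
    have h2 : ∑ x : F, ψ x = ψ 0 + ∑ x ∈ Finset.univ.erase (0 : F), ψ x :=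
      (Finset.add_sum_erase _ _ (Finset.mem_univ (0 : F))).symm
    have h3 : ∑ x ∈ Finset.univ.erase (0 : F), ψ x = ∑ u : Fˣ, ψ (u : F) := by
      rw [Finset.sum_subtype (p := fun x : F => x ≠ 0) (Finset.univ.erase (0 : F))
        (fun x => by simp) (fun x => ψ x)]
      exact (Fintype.sum_equiv (unitsEquivNeZero (G₀ := F)) (fun u => ψ ((u : Fˣ) : F))
        (fun a => ψ (a : F)) (fun u => rfl)).symm
    rw [h2, h3, AddChar.map_zero_eq_one] at hFsum
    linear_combination hFsum
  have hbij : Function.Bijective (fun t : ZMod n => γ ^ t.val) := by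
    rw [Fintype.bijective_iff_injective_and_card]
    constructor
    · intro a b hab
      apply ZMod.val_injective
      exact pow_injOn_Iio_orderOf (by rw [hord]; exact ZMod.val_lt a)
        (by rw [hord]; exact ZMod.val_lt b) hab
    · rw [ZMod.card, hcardU]
  have hinner : ∀ c : F, c ≠ 0 → ∑ t : ZMod n, ψ (c * (γ : F) ^ t.val) = -1 := by
    intro c hc
    calc ∑ t : ZMod n, ψ (c * (γ : F) ^ t.val)
        = ∑ u : Fˣ, ψ (c * (u : F)) :=
          Fintype.sum_bijective _ hbij _ _ (fun t => by rw [Units.val_pow_eq_pow_val])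
      _ = ∑ u : Fˣ, ψ (u : F) := by
          refine Fintype.sum_bijective (fun u => Units.mk0 c hc * u)
            (Group.mulLeft_bijective _) _ _ (fun u => ?_)
          rw [Units.val_mul, Units.val_mk0]
      _ = -1 := husum
  -- the master formula
  have hcc : (1 / (Real.sqrt n : ℂ)) * (1 / (Real.sqrt n : ℂ)) = 1 / (n : ℂ) := by
    rw [div_mul_div_comm, one_mul, ← Complex.ofReal_mul,
      Real.mul_self_sqrt (Nat.cast_nonneg n)]
    norm_num
  have hterm : ∀ w τ : ZMod n, inn n φ (ML n w τ φ) =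
      (1 / (n : ℂ)) * ∑ t : ZMod n,
        (en (w * t))⁻¹ * ψ ((1 - (γ : F) ^ τ.val) * (γ : F) ^ t.val) := by
    intro w τ
    rw [inn, Finset.mul_sum]
    refine Finset.sum_congr rfl fun t _ => ?_
    show φ t * (starRingEnd ℂ) (ML n w τ φ t) = _
    rw [ML]
    rw [hME w t, hφ' t, hφ' (t + τ), hγadd t τ]
    simp only [map_mul]
    rw [henconj, hψconj]
    have hconjc : (starRingEnd ℂ) (1 / (Real.sqrt n : ℂ)) = 1 / (Real.sqrt n : ℂ) := by
      rw [map_div₀, map_one, Complex.conj_ofReal]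
    rw [hconjc]
    have hpsi : ψ ((γ : F) ^ t.val) * (ψ ((γ : F) ^ t.val * (γ : F) ^ τ.val))⁻¹ =
        ψ ((1 - (γ : F) ^ τ.val) * (γ : F) ^ t.val) := by
      rw [← AddChar.map_neg_eq_inv, ← AddChar.map_add_eq_mul]
      congr 1
      ring
    calc (1 / (Real.sqrt n : ℂ) * ψ ((γ : F) ^ t.val)) *
          ((en (w * t))⁻¹ * ((1 / (Real.sqrt n : ℂ)) *
            (ψ ((γ : F) ^ t.val * (γ : F) ^ τ.val))⁻¹))
        = ((1 / (Real.sqrt n : ℂ)) * (1 / (Real.sqrt n : ℂ))) *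
          ((en (w * t))⁻¹ * (ψ ((γ : F) ^ t.val) *
            (ψ ((γ : F) ^ t.val * (γ : F) ^ τ.val))⁻¹)) := by ring
      _ = (1 / (n : ℂ)) * ((en (w * t))⁻¹ *
            ψ ((1 - (γ : F) ^ τ.val) * (γ : F) ^ t.val)) := by rw [hcc, hpsi]
  have hψz : ∀ x : F, ψ x ≠ 0 := fun x => by
    rw [hψ_apply]; exact pow_ne_zero _ (Complex.exp_ne_zero _)
  -- main Gauss-sum case : w ≠ 0, τ ≠ 0
  have hmain : ∀ w τ : ZMod n, w ≠ 0 → τ ≠ 0 →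
      ‖inn n φ (ML n w τ φ)‖ = Real.sqrt ((n : ℝ) + 1) / n := by
    intro w τ hw hτ
    set b : F := 1 - (γ : F) ^ τ.val with hbdef
    have hb : b ≠ 0 := sub_ne_zero.mpr (Ne.symm (hγpow_ne τ hτ))
    set S : ℂ := ∑ t : ZMod n, (en (w * t))⁻¹ * ψ (b * (γ : F) ^ t.val) with hSdef
    have hSconj : (starRingEnd ℂ) S
        = ∑ s : ZMod n, en (w * s) * (ψ (b * (γ : F) ^ s.val))⁻¹ := by
      rw [hSdef, map_sum]
      refine Finset.sum_congr rfl fun s _ => ?_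
      rw [map_mul, map_inv₀, henconj, hψconj, inv_inv]
    have hSS : S * (starRingEnd ℂ) S = (n : ℂ) + 1 := by
      rw [hSconj, hSdef, Finset.sum_mul_sum]
      rw [Finset.sum_comm]
      have hre : ∀ s : ZMod n,
          (∑ t : ZMod n, ((en (w * t))⁻¹ * ψ (b * (γ : F) ^ t.val)) *
            (en (w * s) * (ψ (b * (γ : F) ^ s.val))⁻¹))
          = ∑ m : ZMod n,
              (en (w * m))⁻¹ * ψ ((b * ((γ : F) ^ m.val - 1)) * (γ : F) ^ s.val) := by
        intro s
        refine (Fintype.sum_equiv (Equiv.addLeft s) _ _ (fun m => ?_)).symm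
        show (en (w * m))⁻¹ * ψ ((b * ((γ : F) ^ m.val - 1)) * (γ : F) ^ s.val)
          = ((en (w * (s + m)))⁻¹ * ψ (b * (γ : F) ^ (s + m).val)) *
            (en (w * s) * (ψ (b * (γ : F) ^ s.val))⁻¹)
        rw [hγadd s m, show w * (s + m) = w * s + w * m by ring, AddChar.map_add_eq_mul,
          mul_inv]
        have hpsi : ψ (b * ((γ : F) ^ s.val * (γ : F) ^ m.val)) * (ψ (b * (γ : F) ^ s.val))⁻¹
            = ψ ((b * ((γ : F) ^ m.val - 1)) * (γ : F) ^ s.val) := by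
          rw [← AddChar.map_neg_eq_inv, ← AddChar.map_add_eq_mul]
          congr 1
          ring
        rw [← hpsi]
        have h1 := henz (w * s)
        have h2 := henz (w * m)
        have h3 := hψz (b * (γ : F) ^ s.val)
        field_simp
      have hstep : (∑ s : ZMod n, ∑ t : ZMod n,
            ((en (w * t))⁻¹ * ψ (b * (γ : F) ^ t.val)) *
              (en (w * s) * (ψ (b * (γ : F) ^ s.val))⁻¹))
          = ∑ s : ZMod n, ∑ m : ZMod n,
              (en (w * m))⁻¹ * ψ ((b * ((γ : F) ^ m.val - 1)) * (γ : F) ^ s.val) :=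
        Finset.sum_congr rfl fun s _ => hre s
      rw [hstep, Finset.sum_comm]
      have hmul : ∀ m : ZMod n, (∑ s : ZMod n,
            (en (w * m))⁻¹ * ψ ((b * ((γ : F) ^ m.val - 1)) * (γ : F) ^ s.val))
          = (en (w * m))⁻¹ *
            ∑ s : ZMod n, ψ ((b * ((γ : F) ^ m.val - 1)) * (γ : F) ^ s.val) := by
        intro m
        rw [Finset.mul_sum]
      have hstep2 : (∑ m : ZMod n, ∑ s : ZMod n,
            (en (w * m))⁻¹ * ψ ((b * ((γ : F) ^ m.val - 1)) * (γ : F) ^ s.val))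
          = ∑ m : ZMod n, (en (w * m))⁻¹ *
              ∑ s : ZMod n, ψ ((b * ((γ : F) ^ m.val - 1)) * (γ : F) ^ s.val) :=
        Finset.sum_congr rfl fun m _ => hmul m
      rw [hstep2, ← Finset.add_sum_erase _ _ (Finset.mem_univ (0 : ZMod n))]
      have h0 : (en (w * 0))⁻¹ *
          (∑ s : ZMod n, ψ ((b * ((γ : F) ^ (0 : ZMod n).val - 1)) * (γ : F) ^ s.val))
          = (n : ℂ) := by
        simp only [ZMod.val_zero, pow_zero, sub_self, mul_zero, zero_mul,
          AddChar.map_zero_eq_one, inv_one, one_mul]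
        simp [ZMod.card]
      have hrest : (∑ m ∈ Finset.univ.erase (0 : ZMod n), (en (w * m))⁻¹ *
            ∑ s : ZMod n, ψ ((b * ((γ : F) ^ m.val - 1)) * (γ : F) ^ s.val)) = 1 := by
        have hc : ∀ m ∈ Finset.univ.erase (0 : ZMod n),
            (en (w * m))⁻¹ *
              (∑ s : ZMod n, ψ ((b * ((γ : F) ^ m.val - 1)) * (γ : F) ^ s.val))
            = (en (w * m))⁻¹ * (-1) := by
          intro m hm
          have hm0 : m ≠ 0 := (Finset.mem_erase.mp hm).1
          rw [hinner _ (mul_ne_zero hb (sub_ne_zero.mpr (hγpow_ne m hm0)))]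
        rw [Finset.sum_congr rfl hc]
        have : (∑ m ∈ Finset.univ.erase (0 : ZMod n), (en (w * m))⁻¹)
            = (∑ m : ZMod n, (en (w * m))⁻¹) - (en (w * 0))⁻¹ :=
          Finset.sum_erase_eq_sub (Finset.mem_univ _)
        have h00 : (en (w * 0))⁻¹ = 1 := by
          rw [mul_zero, AddChar.map_zero_eq_one, inv_one]
        calc (∑ m ∈ Finset.univ.erase (0 : ZMod n), (en (w * m))⁻¹ * (-1))
            = -(∑ m ∈ Finset.univ.erase (0 : ZMod n), (en (w * m))⁻¹) := by
              rw [← Finset.sum_neg_distrib]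
              exact Finset.sum_congr rfl fun m _ => by ring
          _ = -((∑ m : ZMod n, (en (w * m))⁻¹) - (en (w * 0))⁻¹) := by rw [this]
          _ = 1 := by rw [hzsum' w hw, h00]; ring
      rw [h0, hrest]
    have hnormSq : (Complex.normSq S : ℂ) = (n : ℂ) + 1 := by
      rw [← Complex.mul_conj, hSS]
    have hnormSq' : Complex.normSq S = (n : ℝ) + 1 := by exact_mod_cast hnormSq
    have habsS : ‖S‖ = Real.sqrt ((n : ℝ) + 1) := by
      rw [Complex.norm_def, hnormSq']
    rw [hterm w τ, ← hbdef, ← hSdef, norm_mul, habsS, norm_div, norm_one,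
      Complex.norm_natCast]
    ring
  -- τ = 0 case
  have hzero : ∀ w : ZMod n, w ≠ 0 → inn n φ (ML n w 0 φ) = 0 := by
    intro w hw
    rw [hterm w 0]
    have hc : ∀ t : ZMod n,
        (en (w * t))⁻¹ * ψ ((1 - (γ : F) ^ (0 : ZMod n).val) * (γ : F) ^ t.val)
        = (en (w * t))⁻¹ := by
      intro t
      rw [ZMod.val_zero, pow_zero, sub_self, zero_mul, AddChar.map_zero_eq_one, mul_one]
    rw [Finset.sum_congr rfl fun t _ => hc t, hzsum' w hw, mul_zero]
  -- w = 0 case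
  have hw0c : ∀ τ : ZMod n, τ ≠ 0 →
      ‖inn n φ (ML n 0 τ φ)‖ = 1 / n := by
    intro τ hτ
    rw [hterm 0 τ]
    have hb : (1 - (γ : F) ^ τ.val) ≠ 0 := sub_ne_zero.mpr (Ne.symm (hγpow_ne τ hτ))
    have hc : ∀ t : ZMod n,
        (en ((0 : ZMod n) * t))⁻¹ * ψ ((1 - (γ : F) ^ τ.val) * (γ : F) ^ t.val)
        = ψ ((1 - (γ : F) ^ τ.val) * (γ : F) ^ t.val) := by
      intro t
      rw [zero_mul, AddChar.map_zero_eq_one, inv_one, one_mul]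
    rw [Finset.sum_congr rfl fun t _ => hc t, hinner _ hb, norm_mul]
    simp [Complex.norm_natCast]
  have hnR : (0 : ℝ) < n := by exact_mod_cast hn0
  have hbound : ∀ w τ : ZMod n, (w, τ) ≠ (0, 0) →
      ‖inn n φ (ML n w τ φ)‖ ≤ Real.sqrt ((n : ℝ) + 1) / n := by
    intro w τ h
    by_cases hτ : τ = 0
    · have hw : w ≠ 0 := fun hw => h (by rw [hw, hτ])
      subst hτ
      rw [hzero w hw, norm_zero]
      positivity
    · by_cases hw : w = 0
      · subst hw
        rw [hw0c τ hτ]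
        have h1 : (1 : ℝ) ≤ Real.sqrt ((n : ℝ) + 1) :=
          Real.one_le_sqrt.mpr (by linarith)
        gcongr
      · rw [hmain w τ hw hτ]
  refine ⟨hbound, fun h2 => ⟨?_, ?_⟩⟩
  · haveI : Fact (1 < n) := ⟨h2⟩
    have h10 : (1 : ZMod n) ≠ 0 := one_ne_zero
    exact ⟨1, 1, by simp [Prod.ext_iff, h10], (hmain 1 1 h10 h10).symm⟩
  · rintro r ⟨w, τ, hwt, rfl⟩
    exact hbound w τ hwt
end

section
/- For any (n, M, λ) unit time-phase signal set S with λ < 1 and M > 1, λ ≥ √( (2nM − n − 1) / ((n+1)(nM − 1)) ). -/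
open Complex Finset

local notation "conj'" => (starRingEnd ℂ)

set_option linter.unusedSectionVars false
set_option maxHeartbeats 1000000





lemma sum_swap4 {ι κ : Type*} [Fintype ι] [Fintype κ] (F : ι → ι → κ → κ → ℂ) :
    ∑ u : κ, ∑ v : κ, ∑ i, ∑ j, F i j u v = ∑ i, ∑ j, ∑ u, ∑ v, F i j u v := by
  calc ∑ u : κ, ∑ v : κ, ∑ i, ∑ j, F i j u v
      = ∑ u : κ, ∑ i, ∑ v : κ, ∑ j, F i j u v :=
        Finset.sum_congr rfl fun u _ => Finset.sum_comm
    _ = ∑ i, ∑ u : κ, ∑ v : κ, ∑ j, F i j u v := Finset.sum_comm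
    _ = ∑ i, ∑ u : κ, ∑ j, ∑ v : κ, F i j u v :=
        Finset.sum_congr rfl fun i _ => Finset.sum_congr rfl fun u _ => Finset.sum_comm
    _ = ∑ i, ∑ j, ∑ u, ∑ v, F i j u v :=
        Finset.sum_congr rfl fun i _ => Finset.sum_comm

lemma exch {ι κ : Type*} [Fintype ι] [Fintype κ] (f : ι → κ → ℂ) :
    ∑ u : κ, ∑ v : κ, (∑ i, f i u * conj' (f i v)) * conj' (∑ j, f j u * conj' (f j v))
    = ∑ i, ∑ j, (∑ u, f i u * conj' (f j u)) * conj' (∑ v, f i v * conj' (f j v)) := by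
  calc ∑ u : κ, ∑ v : κ, (∑ i, f i u * conj' (f i v)) * conj' (∑ j, f j u * conj' (f j v))
      = ∑ u : κ, ∑ v : κ, ∑ i, ∑ j, (f i u * conj' (f i v)) * (conj' (f j u) * f j v) := by
        refine Finset.sum_congr rfl fun u _ => Finset.sum_congr rfl fun v _ => ?_
        rw [map_sum, Finset.sum_mul_sum]
        refine Finset.sum_congr rfl fun i _ => Finset.sum_congr rfl fun j _ => ?_
        simp only [map_mul, Complex.conj_conj]
    _ = ∑ i, ∑ j, ∑ u, ∑ v, (f i u * conj' (f i v)) * (conj' (f j u) * f j v) := sum_swap4 _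
    _ = ∑ i, ∑ j, (∑ u, f i u * conj' (f j u)) * conj' (∑ v, f i v * conj' (f j v)) := by
        refine Finset.sum_congr rfl fun i _ => Finset.sum_congr rfl fun j _ => ?_
        rw [map_sum, Finset.sum_mul_sum]
        refine Finset.sum_congr rfl fun u _ => Finset.sum_congr rfl fun v _ => ?_
        simp only [map_mul, Complex.conj_conj]
        ring


section core
variable {ι κ : Type*} [Fintype ι] [Fintype κ]

noncomputable def Amat (x : ι → κ → ℂ) (s t : κ) : ℂ := ∑ i, x i s * conj' (x i t)
noncomputable def cc (x : ι → κ → ℂ) (i j : ι) : ℂ := ∑ t, x i t * conj' (x j t)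
noncomputable def S1 (x : ι → κ → ℂ) : ℂ := ∑ i, ∑ j, cc x i j * conj' (cc x i j)
noncomputable def S2 (x : ι → κ → ℂ) : ℂ := ∑ i, ∑ j, (cc x i j * conj' (cc x i j))^2
noncomputable def Yt (x : ι → κ → ℂ) (s t s' t' : κ) : ℂ :=
  ∑ i, x i s * x i t * conj' (x i s') * conj' (x i t')
noncomputable def dl [DecidableEq κ] (a b : κ) : ℂ := if a = b then 1 else 0
noncomputable def hsum (f g : κ → κ → κ → κ → ℂ) : ℂ :=
  ∑ s, ∑ t, ∑ s', ∑ t', f s t s' t' * conj' (g s t s' t')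

variable (x : ι → κ → ℂ)

lemma conj_Amat (s t : κ) : conj' (Amat x s t) = Amat x t s := by
  simp only [Amat, map_sum, map_mul, Complex.conj_conj]
  exact Finset.sum_congr rfl fun i _ => by ring

set_option linter.unusedSectionVars false

lemma trA (hx : ∀ i, ∑ t, x i t * conj' (x i t) = 1) :
    ∑ s, Amat x s s = (Fintype.card ι : ℂ) := by
  simp only [Amat]
  rw [Finset.sum_comm]
  simp [hx, Finset.card_univ]

lemma S1A : ∑ s, ∑ t, Amat x s t * conj' (Amat x s t) = S1 x := by
  have := exch x
  simpa [Amat, cc, S1] using this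

end core
section core2
set_option linter.unusedSectionVars false
variable {ι κ : Type*} [Fintype ι] [Fintype κ] [DecidableEq κ] (x : ι → κ → ℂ)

lemma conj_dl (a b : κ) : conj' (dl (κ := κ) a b) = dl a b := by
  simp [dl, apply_ite]

lemma conj_Yt (s t s' t' : κ) : conj' (Yt x s t s' t') = Yt x s' t' s t := by
  simp only [Yt, map_sum, map_mul, Complex.conj_conj]
  exact Finset.sum_congr rfl fun i _ => by ring

-- contractions of Y (need unit norms)

lemma Ycontr1 (hx : ∀ i, ∑ t, x i t * conj' (x i t) = 1) (s s' : κ) : ∑ t, Yt x s t s' t = Amat x s s' := by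
  simp only [Yt, Amat]
  rw [Finset.sum_comm]
  refine Finset.sum_congr rfl fun i _ => ?_
  have : ∑ t, x i s * x i t * conj' (x i s') * conj' (x i t)
      = (x i s * conj' (x i s')) * ∑ t, x i t * conj' (x i t) := by
    rw [Finset.mul_sum]; exact Finset.sum_congr rfl fun t _ => by ring
  rw [this, hx, mul_one]

lemma Ycontr2 (hx : ∀ i, ∑ t, x i t * conj' (x i t) = 1) (t t' : κ) : ∑ s, Yt x s t s t' = Amat x t t' := by
  simp only [Yt, Amat]
  rw [Finset.sum_comm]
  refine Finset.sum_congr rfl fun i _ => ?_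
  have : ∑ s, x i s * x i t * conj' (x i s) * conj' (x i t')
      = (x i t * conj' (x i t')) * ∑ s, x i s * conj' (x i s) := by
    rw [Finset.mul_sum]; exact Finset.sum_congr rfl fun s _ => by ring
  rw [this, hx, mul_one]

lemma Ycontr3 (hx : ∀ i, ∑ t, x i t * conj' (x i t) = 1) (s t' : κ) : ∑ t, Yt x s t t t' = Amat x s t' := by
  simp only [Yt, Amat]
  rw [Finset.sum_comm]
  refine Finset.sum_congr rfl fun i _ => ?_
  have : ∑ t, x i s * x i t * conj' (x i t) * conj' (x i t')
      = (x i s * conj' (x i t')) * ∑ t, x i t * conj' (x i t) := by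
    rw [Finset.mul_sum]; exact Finset.sum_congr rfl fun t _ => by ring
  rw [this, hx, mul_one]

lemma Ycontr4 (hx : ∀ i, ∑ t, x i t * conj' (x i t) = 1) (t s' : κ) : ∑ s, Yt x s t s' s = Amat x t s' := by
  simp only [Yt, Amat]
  rw [Finset.sum_comm]
  refine Finset.sum_congr rfl fun i _ => ?_
  have : ∑ s, x i s * x i t * conj' (x i s') * conj' (x i s)
      = (x i t * conj' (x i s')) * ∑ s, x i s * conj' (x i s) := by
    rw [Finset.mul_sum]; exact Finset.sum_congr rfl fun s _ => by ring
  rw [this, hx, mul_one]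

end core2
section core3
set_option linter.unusedSectionVars false
variable {ι κ : Type*} [Fintype ι] [Fintype κ] [DecidableEq κ] (x : ι → κ → ℂ)

lemma S1Aa : ∑ s, ∑ t, Amat x s t * Amat x t s = S1 x := by
  have h := S1A x
  simp only [conj_Amat] at h
  exact h

lemma S1Ab : ∑ s, ∑ t, Amat x t s * Amat x s t = S1 x := by
  rw [← S1Aa x]
  exact Finset.sum_congr rfl fun s _ => Finset.sum_congr rfl fun t _ => mul_comm _ _

lemma mB11 : hsum (fun s t s' t' => Amat x s s' * dl t t') (fun s t s' t' => Amat x s s' * dl t t') = (Fintype.card κ : ℂ) * S1 x := by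
  simp only [hsum, map_mul, conj_dl, conj_Amat, conj_Yt, dl, apply_ite (starRingEnd ℂ),
    map_one, map_zero, mul_ite, ite_mul, mul_one, mul_zero, one_mul, zero_mul,
    Finset.sum_ite_irrel, Finset.sum_ite_eq, Finset.sum_ite_eq', Finset.sum_const_zero, Finset.mem_univ, if_true]
  simp only [Finset.sum_const, Finset.card_univ, nsmul_eq_mul, ← Finset.mul_sum]
  congr 1
  exact S1Aa x

lemma mB22 : hsum (fun s t s' t' => Amat x t t' * dl s s') (fun s t s' t' => Amat x t t' * dl s s') = (Fintype.card κ : ℂ) * S1 x := by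
  simp only [hsum, map_mul, conj_dl, conj_Amat, conj_Yt, dl, apply_ite (starRingEnd ℂ),
    map_one, map_zero, mul_ite, ite_mul, mul_one, mul_zero, one_mul, zero_mul,
    Finset.sum_ite_irrel, Finset.sum_ite_eq, Finset.sum_ite_eq', Finset.sum_const_zero, Finset.mem_univ, if_true]
  simp only [Finset.sum_const, Finset.card_univ, nsmul_eq_mul, ← Finset.mul_sum]
  congr 1
  exact S1Aa x

lemma mB33 : hsum (fun s t s' t' => Amat x s t' * dl t s') (fun s t s' t' => Amat x s t' * dl t s') = (Fintype.card κ : ℂ) * S1 x := by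
  simp only [hsum, map_mul, conj_dl, conj_Amat, conj_Yt, dl, apply_ite (starRingEnd ℂ),
    map_one, map_zero, mul_ite, ite_mul, mul_one, mul_zero, one_mul, zero_mul,
    Finset.sum_ite_irrel, Finset.sum_ite_eq, Finset.sum_ite_eq', Finset.sum_const_zero, Finset.mem_univ, if_true]
  simp only [Finset.sum_const, Finset.card_univ, nsmul_eq_mul, ← Finset.mul_sum]
  congr 1
  exact S1Aa x

lemma mB44 : hsum (fun s t s' t' => Amat x t s' * dl s t') (fun s t s' t' => Amat x t s' * dl s t') = (Fintype.card κ : ℂ) * S1 x := by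
  simp only [hsum, map_mul, conj_dl, conj_Amat, conj_Yt, dl, apply_ite (starRingEnd ℂ),
    map_one, map_zero, mul_ite, ite_mul, mul_one, mul_zero, one_mul, zero_mul,
    Finset.sum_ite_irrel, Finset.sum_ite_eq, Finset.sum_ite_eq', Finset.sum_const_zero, Finset.mem_univ, if_true]
  simp only [Finset.sum_const, Finset.card_univ, nsmul_eq_mul, ← Finset.mul_sum]
  congr 1
  exact S1Aa x

lemma mB12 (hx : ∀ i, ∑ t, x i t * conj' (x i t) = 1) : hsum (fun s t s' t' => Amat x s s' * dl t t') (fun s t s' t' => Amat x t t' * dl s s') = (Fintype.card ι : ℂ)^2 := by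
  simp only [hsum, map_mul, conj_dl, conj_Amat, conj_Yt, dl, apply_ite (starRingEnd ℂ),
    map_one, map_zero, mul_ite, ite_mul, mul_one, mul_zero, one_mul, zero_mul,
    Finset.sum_ite_irrel, Finset.sum_ite_eq, Finset.sum_ite_eq', Finset.sum_const_zero, Finset.mem_univ, if_true]
  rw [← Finset.sum_mul_sum, trA x hx, sq]

lemma mB34 (hx : ∀ i, ∑ t, x i t * conj' (x i t) = 1) : hsum (fun s t s' t' => Amat x s t' * dl t s') (fun s t s' t' => Amat x t s' * dl s t') = (Fintype.card ι : ℂ)^2 := by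
  simp only [hsum, map_mul, conj_dl, conj_Amat, conj_Yt, dl, apply_ite (starRingEnd ℂ),
    map_one, map_zero, mul_ite, ite_mul, mul_one, mul_zero, one_mul, zero_mul,
    Finset.sum_ite_irrel, Finset.sum_ite_eq, Finset.sum_ite_eq', Finset.sum_const_zero, Finset.mem_univ, if_true]
  rw [← Finset.sum_mul_sum, trA x hx, sq]

lemma mB13 : hsum (fun s t s' t' => Amat x s s' * dl t t') (fun s t s' t' => Amat x s t' * dl t s') = S1 x := by
  simp only [hsum, map_mul, conj_dl, conj_Amat, conj_Yt, dl, apply_ite (starRingEnd ℂ),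
    map_one, map_zero, mul_ite, ite_mul, mul_one, mul_zero, one_mul, zero_mul,
    Finset.sum_ite_irrel, Finset.sum_ite_eq, Finset.sum_ite_eq', Finset.sum_const_zero, Finset.mem_univ, if_true]
  exact S1Aa x

lemma mB14 : hsum (fun s t s' t' => Amat x s s' * dl t t') (fun s t s' t' => Amat x t s' * dl s t') = S1 x := by
  simp only [hsum, map_mul, conj_dl, conj_Amat, conj_Yt, dl, apply_ite (starRingEnd ℂ),
    map_one, map_zero, mul_ite, ite_mul, mul_one, mul_zero, one_mul, zero_mul,
    Finset.sum_ite_irrel, Finset.sum_ite_eq, Finset.sum_ite_eq', Finset.sum_const_zero, Finset.mem_univ, if_true]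
  exact S1Aa x

lemma mB23 : hsum (fun s t s' t' => Amat x t t' * dl s s') (fun s t s' t' => Amat x s t' * dl t s') = S1 x := by
  simp only [hsum, map_mul, conj_dl, conj_Amat, conj_Yt, dl, apply_ite (starRingEnd ℂ),
    map_one, map_zero, mul_ite, ite_mul, mul_one, mul_zero, one_mul, zero_mul,
    Finset.sum_ite_irrel, Finset.sum_ite_eq, Finset.sum_ite_eq', Finset.sum_const_zero, Finset.mem_univ, if_true]
  exact S1Aa x

lemma mB24 : hsum (fun s t s' t' => Amat x t t' * dl s s') (fun s t s' t' => Amat x t s' * dl s t') = S1 x := by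
  simp only [hsum, map_mul, conj_dl, conj_Amat, conj_Yt, dl, apply_ite (starRingEnd ℂ),
    map_one, map_zero, mul_ite, ite_mul, mul_one, mul_zero, one_mul, zero_mul,
    Finset.sum_ite_irrel, Finset.sum_ite_eq, Finset.sum_ite_eq', Finset.sum_const_zero, Finset.mem_univ, if_true]
  exact S1Ab x

lemma mB1D1 (hx : ∀ i, ∑ t, x i t * conj' (x i t) = 1) : hsum (fun s t s' t' => Amat x s s' * dl t t') (fun s t s' t' => dl s s' * dl t t') = (Fintype.card κ : ℂ) * (Fintype.card ι : ℂ) := by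
  simp only [hsum, map_mul, conj_dl, conj_Amat, conj_Yt, dl, apply_ite (starRingEnd ℂ),
    map_one, map_zero, mul_ite, ite_mul, mul_one, mul_zero, one_mul, zero_mul,
    Finset.sum_ite_irrel, Finset.sum_ite_eq, Finset.sum_ite_eq', Finset.sum_const_zero, Finset.mem_univ, if_true]
  simp only [Finset.sum_const, Finset.card_univ, nsmul_eq_mul]
  rw [← Finset.mul_sum, trA x hx]

lemma mB1D2 (hx : ∀ i, ∑ t, x i t * conj' (x i t) = 1) : hsum (fun s t s' t' => Amat x s s' * dl t t') (fun s t s' t' => dl s t' * dl t s') = (Fintype.card ι : ℂ) := by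
  simp only [hsum, map_mul, conj_dl, conj_Amat, conj_Yt, dl, apply_ite (starRingEnd ℂ),
    map_one, map_zero, mul_ite, ite_mul, mul_one, mul_zero, one_mul, zero_mul,
    Finset.sum_ite_irrel, Finset.sum_ite_eq, Finset.sum_ite_eq', Finset.sum_const_zero, Finset.mem_univ, if_true]
  exact trA x hx

lemma mB2D1 (hx : ∀ i, ∑ t, x i t * conj' (x i t) = 1) : hsum (fun s t s' t' => Amat x t t' * dl s s') (fun s t s' t' => dl s s' * dl t t') = (Fintype.card κ : ℂ) * (Fintype.card ι : ℂ) := by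
  simp only [hsum, map_mul, conj_dl, conj_Amat, conj_Yt, dl, apply_ite (starRingEnd ℂ),
    map_one, map_zero, mul_ite, ite_mul, mul_one, mul_zero, one_mul, zero_mul,
    Finset.sum_ite_irrel, Finset.sum_ite_eq, Finset.sum_ite_eq', Finset.sum_const_zero, Finset.mem_univ, if_true]
  simp only [trA x hx, Finset.sum_const, Finset.card_univ, nsmul_eq_mul]

lemma mB2D2 (hx : ∀ i, ∑ t, x i t * conj' (x i t) = 1) : hsum (fun s t s' t' => Amat x t t' * dl s s') (fun s t s' t' => dl s t' * dl t s') = (Fintype.card ι : ℂ) := by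
  simp only [hsum, map_mul, conj_dl, conj_Amat, conj_Yt, dl, apply_ite (starRingEnd ℂ),
    map_one, map_zero, mul_ite, ite_mul, mul_one, mul_zero, one_mul, zero_mul,
    Finset.sum_ite_irrel, Finset.sum_ite_eq, Finset.sum_ite_eq', Finset.sum_const_zero, Finset.mem_univ, if_true]
  exact trA x hx

lemma mB3D1 (hx : ∀ i, ∑ t, x i t * conj' (x i t) = 1) : hsum (fun s t s' t' => Amat x s t' * dl t s') (fun s t s' t' => dl s s' * dl t t') = (Fintype.card ι : ℂ) := by
  simp only [hsum, map_mul, conj_dl, conj_Amat, conj_Yt, dl, apply_ite (starRingEnd ℂ),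
    map_one, map_zero, mul_ite, ite_mul, mul_one, mul_zero, one_mul, zero_mul,
    Finset.sum_ite_irrel, Finset.sum_ite_eq, Finset.sum_ite_eq', Finset.sum_const_zero, Finset.mem_univ, if_true]
  exact trA x hx

lemma mB3D2 (hx : ∀ i, ∑ t, x i t * conj' (x i t) = 1) : hsum (fun s t s' t' => Amat x s t' * dl t s') (fun s t s' t' => dl s t' * dl t s') = (Fintype.card κ : ℂ) * (Fintype.card ι : ℂ) := by
  simp only [hsum, map_mul, conj_dl, conj_Amat, conj_Yt, dl, apply_ite (starRingEnd ℂ),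
    map_one, map_zero, mul_ite, ite_mul, mul_one, mul_zero, one_mul, zero_mul,
    Finset.sum_ite_irrel, Finset.sum_ite_eq, Finset.sum_ite_eq', Finset.sum_const_zero, Finset.mem_univ, if_true]
  simp only [Finset.sum_const, Finset.card_univ, nsmul_eq_mul]
  rw [← Finset.mul_sum, trA x hx]

lemma mB4D1 (hx : ∀ i, ∑ t, x i t * conj' (x i t) = 1) : hsum (fun s t s' t' => Amat x t s' * dl s t') (fun s t s' t' => dl s s' * dl t t') = (Fintype.card ι : ℂ) := by
  simp only [hsum, map_mul, conj_dl, conj_Amat, conj_Yt, dl, apply_ite (starRingEnd ℂ),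
    map_one, map_zero, mul_ite, ite_mul, mul_one, mul_zero, one_mul, zero_mul,
    Finset.sum_ite_irrel, Finset.sum_ite_eq, Finset.sum_ite_eq', Finset.sum_const_zero, Finset.mem_univ, if_true]
  exact trA x hx

lemma mB4D2 (hx : ∀ i, ∑ t, x i t * conj' (x i t) = 1) : hsum (fun s t s' t' => Amat x t s' * dl s t') (fun s t s' t' => dl s t' * dl t s') = (Fintype.card κ : ℂ) * (Fintype.card ι : ℂ) := by
  simp only [hsum, map_mul, conj_dl, conj_Amat, conj_Yt, dl, apply_ite (starRingEnd ℂ),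
    map_one, map_zero, mul_ite, ite_mul, mul_one, mul_zero, one_mul, zero_mul,
    Finset.sum_ite_irrel, Finset.sum_ite_eq, Finset.sum_ite_eq', Finset.sum_const_zero, Finset.mem_univ, if_true]
  simp only [trA x hx, Finset.sum_const, Finset.card_univ, nsmul_eq_mul]

lemma mD1D1 : hsum (κ := κ) (fun s t s' t' => dl s s' * dl t t') (fun s t s' t' => dl s s' * dl t t') = (Fintype.card κ : ℂ)^2 := by
  simp only [hsum, map_mul, conj_dl, conj_Amat, conj_Yt, dl, apply_ite (starRingEnd ℂ),
    map_one, map_zero, mul_ite, ite_mul, mul_one, mul_zero, one_mul, zero_mul,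
    Finset.sum_ite_irrel, Finset.sum_ite_eq, Finset.sum_ite_eq', Finset.sum_const_zero, Finset.mem_univ, if_true]
  simp [Finset.sum_const, Finset.card_univ, sq]

lemma mD1D2 : hsum (κ := κ) (fun s t s' t' => dl s s' * dl t t') (fun s t s' t' => dl s t' * dl t s') = (Fintype.card κ : ℂ) := by
  simp only [hsum, map_mul, conj_dl, conj_Amat, conj_Yt, dl, apply_ite (starRingEnd ℂ),
    map_one, map_zero, mul_ite, ite_mul, mul_one, mul_zero, one_mul, zero_mul,
    Finset.sum_ite_irrel, Finset.sum_ite_eq, Finset.sum_ite_eq', Finset.sum_const_zero, Finset.mem_univ, if_true]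
  simp [Finset.sum_const, Finset.card_univ]

lemma mD2D1 : hsum (κ := κ) (fun s t s' t' => dl s t' * dl t s') (fun s t s' t' => dl s s' * dl t t') = (Fintype.card κ : ℂ) := by
  simp only [hsum, map_mul, conj_dl, conj_Amat, conj_Yt, dl, apply_ite (starRingEnd ℂ),
    map_one, map_zero, mul_ite, ite_mul, mul_one, mul_zero, one_mul, zero_mul,
    Finset.sum_ite_irrel, Finset.sum_ite_eq, Finset.sum_ite_eq', Finset.sum_const_zero, Finset.mem_univ, if_true]
  simp [Finset.sum_const, Finset.card_univ]

lemma mD2D2 : hsum (κ := κ) (fun s t s' t' => dl s t' * dl t s') (fun s t s' t' => dl s t' * dl t s') = (Fintype.card κ : ℂ)^2 := by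
  simp only [hsum, map_mul, conj_dl, conj_Amat, conj_Yt, dl, apply_ite (starRingEnd ℂ),
    map_one, map_zero, mul_ite, ite_mul, mul_one, mul_zero, one_mul, zero_mul,
    Finset.sum_ite_irrel, Finset.sum_ite_eq, Finset.sum_ite_eq', Finset.sum_const_zero, Finset.mem_univ, if_true]
  simp [Finset.sum_const, Finset.card_univ, sq]

lemma yB1 (hx : ∀ i, ∑ t, x i t * conj' (x i t) = 1) : hsum (fun s t s' t' => Yt x s t s' t') (fun s t s' t' => Amat x s s' * dl t t') = S1 x := by
  simp only [hsum, map_mul, conj_dl, conj_Amat, conj_Yt, dl, apply_ite (starRingEnd ℂ),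
    map_one, map_zero, mul_ite, ite_mul, mul_one, mul_zero, one_mul, zero_mul,
    Finset.sum_ite_irrel, Finset.sum_ite_eq, Finset.sum_ite_eq', Finset.sum_const_zero, Finset.mem_univ, if_true]
  calc ∑ x1, ∑ x2, ∑ x3, Yt x x1 x2 x3 x2 * Amat x x3 x1
      = ∑ x1, ∑ x3, (∑ x2, Yt x x1 x2 x3 x2) * Amat x x3 x1 := by
        refine Finset.sum_congr rfl fun x1 _ => ?_
        rw [Finset.sum_comm]
        exact Finset.sum_congr rfl fun x3 _ => (Finset.sum_mul _ _ _).symm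
    _ = S1 x := by simp only [Ycontr1 x hx]; exact S1Aa x

lemma yB2 (hx : ∀ i, ∑ t, x i t * conj' (x i t) = 1) : hsum (fun s t s' t' => Yt x s t s' t') (fun s t s' t' => Amat x t t' * dl s s') = S1 x := by
  simp only [hsum, map_mul, conj_dl, conj_Amat, conj_Yt, dl, apply_ite (starRingEnd ℂ),
    map_one, map_zero, mul_ite, ite_mul, mul_one, mul_zero, one_mul, zero_mul,
    Finset.sum_ite_irrel, Finset.sum_ite_eq, Finset.sum_ite_eq', Finset.sum_const_zero, Finset.mem_univ, if_true]
  calc ∑ x1, ∑ x2, ∑ x3, Yt x x1 x2 x1 x3 * Amat x x3 x2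
      = ∑ x2, ∑ x3, (∑ x1, Yt x x1 x2 x1 x3) * Amat x x3 x2 := by
        rw [Finset.sum_comm]
        refine Finset.sum_congr rfl fun x2 _ => ?_
        rw [Finset.sum_comm]
        exact Finset.sum_congr rfl fun x3 _ => (Finset.sum_mul _ _ _).symm
    _ = S1 x := by simp only [Ycontr2 x hx]; exact S1Aa x

lemma yB3 (hx : ∀ i, ∑ t, x i t * conj' (x i t) = 1) : hsum (fun s t s' t' => Yt x s t s' t') (fun s t s' t' => Amat x s t' * dl t s') = S1 x := by
  simp only [hsum, map_mul, conj_dl, conj_Amat, conj_Yt, dl, apply_ite (starRingEnd ℂ),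
    map_one, map_zero, mul_ite, ite_mul, mul_one, mul_zero, one_mul, zero_mul,
    Finset.sum_ite_irrel, Finset.sum_ite_eq, Finset.sum_ite_eq', Finset.sum_const_zero, Finset.mem_univ, if_true]
  calc ∑ x1, ∑ x2, ∑ x3, Yt x x1 x2 x2 x3 * Amat x x3 x1
      = ∑ x1, ∑ x3, (∑ x2, Yt x x1 x2 x2 x3) * Amat x x3 x1 := by
        refine Finset.sum_congr rfl fun x1 _ => ?_
        rw [Finset.sum_comm]
        exact Finset.sum_congr rfl fun x3 _ => (Finset.sum_mul _ _ _).symm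
    _ = S1 x := by simp only [Ycontr3 x hx]; exact S1Aa x

lemma yB4 (hx : ∀ i, ∑ t, x i t * conj' (x i t) = 1) : hsum (fun s t s' t' => Yt x s t s' t') (fun s t s' t' => Amat x t s' * dl s t') = S1 x := by
  simp only [hsum, map_mul, conj_dl, conj_Amat, conj_Yt, dl, apply_ite (starRingEnd ℂ),
    map_one, map_zero, mul_ite, ite_mul, mul_one, mul_zero, one_mul, zero_mul,
    Finset.sum_ite_irrel, Finset.sum_ite_eq, Finset.sum_ite_eq', Finset.sum_const_zero, Finset.mem_univ, if_true]
  calc ∑ x1, ∑ x2, ∑ x3, Yt x x1 x2 x3 x1 * Amat x x3 x2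
      = ∑ x2, ∑ x3, (∑ x1, Yt x x1 x2 x3 x1) * Amat x x3 x2 := by
        rw [Finset.sum_comm]
        refine Finset.sum_congr rfl fun x2 _ => ?_
        rw [Finset.sum_comm]
        exact Finset.sum_congr rfl fun x3 _ => (Finset.sum_mul _ _ _).symm
    _ = S1 x := by simp only [Ycontr4 x hx]; exact S1Aa x

lemma yD1 (hx : ∀ i, ∑ t, x i t * conj' (x i t) = 1) : hsum (fun s t s' t' => Yt x s t s' t') (fun s t s' t' => dl s s' * dl t t') = (Fintype.card ι : ℂ) := by
  simp only [hsum, map_mul, conj_dl, conj_Amat, conj_Yt, dl, apply_ite (starRingEnd ℂ),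
    map_one, map_zero, mul_ite, ite_mul, mul_one, mul_zero, one_mul, zero_mul,
    Finset.sum_ite_irrel, Finset.sum_ite_eq, Finset.sum_ite_eq', Finset.sum_const_zero, Finset.mem_univ, if_true]
  simp only [Ycontr1 x hx]
  exact trA x hx

lemma yD2 (hx : ∀ i, ∑ t, x i t * conj' (x i t) = 1) : hsum (fun s t s' t' => Yt x s t s' t') (fun s t s' t' => dl s t' * dl t s') = (Fintype.card ι : ℂ) := by
  simp only [hsum, map_mul, conj_dl, conj_Amat, conj_Yt, dl, apply_ite (starRingEnd ℂ),
    map_one, map_zero, mul_ite, ite_mul, mul_one, mul_zero, one_mul, zero_mul,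
    Finset.sum_ite_irrel, Finset.sum_ite_eq, Finset.sum_ite_eq', Finset.sum_const_zero, Finset.mem_univ, if_true]
  simp only [Ycontr3 x hx]
  exact trA x hx

end core3
section core4
set_option linter.unusedSectionVars false
variable {ι κ : Type*} [Fintype ι] [Fintype κ] [DecidableEq κ] (x : ι → κ → ℂ)

lemma Yt_eq (s t s' t' : κ) :
    Yt x s t s' t' = ∑ i, (x i s * x i t) * conj' (x i s' * x i t') := by
  simp only [Yt, map_mul]
  exact Finset.sum_congr rfl fun i _ => by ring

lemma cc_sq (i j : ι) :
    ∑ s, ∑ t, (x i s * x i t) * conj' (x j s * x j t) = cc x i j * cc x i j := by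
  simp only [map_mul, cc]
  rw [Finset.sum_mul_sum]
  refine Finset.sum_congr rfl fun s _ => Finset.sum_congr rfl fun t _ => by ring

lemma yy : hsum (fun s t s' t' => Yt x s t s' t') (fun s t s' t' => Yt x s t s' t') = S2 x := by
  have h := exch (fun i (u : κ × κ) => x i u.1 * x i u.2)
  simp only [Fintype.sum_prod_type] at h
  calc hsum (fun s t s' t' => Yt x s t s' t') (fun s t s' t' => Yt x s t s' t')
      = ∑ s, ∑ t, ∑ s', ∑ t', (∑ i, (x i s * x i t) * conj' (x i s' * x i t')) *
          conj' (∑ j, (x j s * x j t) * conj' (x j s' * x j t')) := by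
        simp only [hsum, Yt_eq]
    _ = ∑ i, ∑ j, (∑ s, ∑ t, (x i s * x i t) * conj' (x j s * x j t)) *
          conj' (∑ s, ∑ t, (x i s * x i t) * conj' (x j s * x j t)) := h
    _ = S2 x := by
        simp only [cc_sq, S2]
        refine Finset.sum_congr rfl fun i _ => Finset.sum_congr rfl fun j _ => ?_
        simp only [map_mul]
        ring

lemma hsum_conj (f g : κ → κ → κ → κ → ℂ) : hsum f g = conj' (hsum g f) := by
  simp only [hsum, map_sum, map_mul, Complex.conj_conj]
  refine Finset.sum_congr rfl fun s _ => Finset.sum_congr rfl fun t _ =>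
    Finset.sum_congr rfl fun s' _ => Finset.sum_congr rfl fun t' _ => by ring

lemma conj_S1 : conj' (S1 x) = S1 x := by
  simp only [S1, map_sum, map_mul, Complex.conj_conj]
  refine Finset.sum_congr rfl fun i _ => Finset.sum_congr rfl fun j _ => by ring

lemma conj_S2 : conj' (S2 x) = S2 x := by
  simp only [S2, map_sum, map_pow, map_mul, Complex.conj_conj]
  refine Finset.sum_congr rfl fun i _ => Finset.sum_congr rfl fun j _ => by ring

lemma hsum_add_left (f g h : κ → κ → κ → κ → ℂ) :
    hsum (fun s t s' t' => f s t s' t' + g s t s' t') h = hsum f h + hsum g h := by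
  simp only [hsum, add_mul, Finset.sum_add_distrib]

lemma hsum_add_right (f g h : κ → κ → κ → κ → ℂ) :
    hsum f (fun s t s' t' => g s t s' t' + h s t s' t') = hsum f g + hsum f h := by
  simp only [hsum, map_add, mul_add, Finset.sum_add_distrib]

lemma hsum_smul_left (a : ℂ) (f g : κ → κ → κ → κ → ℂ) :
    hsum (fun s t s' t' => a * f s t s' t') g = a * hsum f g := by
  simp only [hsum, Finset.mul_sum, mul_assoc]

lemma hsum_smul_right (a : ℂ) (f g : κ → κ → κ → κ → ℂ) :
    hsum f (fun s t s' t' => a * g s t s' t') = conj' a * hsum f g := by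
  simp only [hsum, map_mul, Finset.mul_sum]
  refine Finset.sum_congr rfl fun s _ => Finset.sum_congr rfl fun t _ =>
    Finset.sum_congr rfl fun s' _ => Finset.sum_congr rfl fun t' _ => by ring

lemma hsum_self (f : κ → κ → κ → κ → ℂ) :
    hsum f f = ((∑ s, ∑ t, ∑ s', ∑ t', Complex.normSq (f s t s' t') : ℝ) : ℂ) := by
  push_cast
  refine Finset.sum_congr rfl fun s _ => Finset.sum_congr rfl fun t _ =>
    Finset.sum_congr rfl fun s' _ => Finset.sum_congr rfl fun t' _ => ?_
  exact (Complex.mul_conj _)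

end core4
section core5
set_option linter.unusedSectionVars false
variable {ι κ : Type*} [Fintype ι] [Fintype κ] [DecidableEq κ] (x : ι → κ → ℂ)

noncomputable def Brf : κ → κ → κ → κ → ℂ := fun s t s' t' =>
  Amat x s s' * dl t t' + Amat x t t' * dl s s' + Amat x s t' * dl t s' + Amat x t s' * dl s t'

noncomputable def Df : κ → κ → κ → κ → ℂ := fun s t s' t' =>
  dl s s' * dl t t' + dl s t' * dl t s'

-- derived minis via conjugation
lemma conj_val_S1 : conj' (S1 x) = S1 x := conj_S1 x

lemma mB21 (hx : ∀ i, ∑ t, x i t * conj' (x i t) = 1) :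
    hsum (fun s t s' t' => Amat x t t' * dl s s') (fun s t s' t' => Amat x s s' * dl t t')
    = (Fintype.card ι : ℂ)^2 := by
  rw [hsum_conj, mB12 x hx]; simp
lemma mB31x : hsum (fun s t s' t' => Amat x s t' * dl t s') (fun s t s' t' => Amat x s s' * dl t t') = S1 x := by
  rw [hsum_conj, mB13 x, conj_S1]
lemma mB41x : hsum (fun s t s' t' => Amat x t s' * dl s t') (fun s t s' t' => Amat x s s' * dl t t') = S1 x := by
  rw [hsum_conj, mB14 x, conj_S1]
lemma mB32x : hsum (fun s t s' t' => Amat x s t' * dl t s') (fun s t s' t' => Amat x t t' * dl s s') = S1 x := by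
  rw [hsum_conj, mB23 x, conj_S1]
lemma mB42x : hsum (fun s t s' t' => Amat x t s' * dl s t') (fun s t s' t' => Amat x t t' * dl s s') = S1 x := by
  rw [hsum_conj, mB24 x, conj_S1]
lemma mB43 (hx : ∀ i, ∑ t, x i t * conj' (x i t) = 1) :
    hsum (fun s t s' t' => Amat x t s' * dl s t') (fun s t s' t' => Amat x s t' * dl t s')
    = (Fintype.card ι : ℂ)^2 := by
  rw [hsum_conj, mB34 x hx]; simp

lemma mD1B1 (hx : ∀ i, ∑ t, x i t * conj' (x i t) = 1) :
    hsum (fun s t s' t' => dl s s' * dl t t') (fun s t s' t' => Amat x s s' * dl t t')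
    = (Fintype.card κ : ℂ) * (Fintype.card ι : ℂ) := by
  rw [hsum_conj, mB1D1 x hx]; simp
lemma mD2B1 (hx : ∀ i, ∑ t, x i t * conj' (x i t) = 1) :
    hsum (fun s t s' t' => dl s t' * dl t s') (fun s t s' t' => Amat x s s' * dl t t')
    = (Fintype.card ι : ℂ) := by
  rw [hsum_conj, mB1D2 x hx]; simp
lemma mD1B2 (hx : ∀ i, ∑ t, x i t * conj' (x i t) = 1) :
    hsum (fun s t s' t' => dl s s' * dl t t') (fun s t s' t' => Amat x t t' * dl s s')
    = (Fintype.card κ : ℂ) * (Fintype.card ι : ℂ) := by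
  rw [hsum_conj, mB2D1 x hx]; simp
lemma mD2B2 (hx : ∀ i, ∑ t, x i t * conj' (x i t) = 1) :
    hsum (fun s t s' t' => dl s t' * dl t s') (fun s t s' t' => Amat x t t' * dl s s')
    = (Fintype.card ι : ℂ) := by
  rw [hsum_conj, mB2D2 x hx]; simp
lemma mD1B3 (hx : ∀ i, ∑ t, x i t * conj' (x i t) = 1) :
    hsum (fun s t s' t' => dl s s' * dl t t') (fun s t s' t' => Amat x s t' * dl t s')
    = (Fintype.card ι : ℂ) := by
  rw [hsum_conj, mB3D1 x hx]; simp
lemma mD2B3 (hx : ∀ i, ∑ t, x i t * conj' (x i t) = 1) :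
    hsum (fun s t s' t' => dl s t' * dl t s') (fun s t s' t' => Amat x s t' * dl t s')
    = (Fintype.card κ : ℂ) * (Fintype.card ι : ℂ) := by
  rw [hsum_conj, mB3D2 x hx]; simp
lemma mD1B4 (hx : ∀ i, ∑ t, x i t * conj' (x i t) = 1) :
    hsum (fun s t s' t' => dl s s' * dl t t') (fun s t s' t' => Amat x t s' * dl s t')
    = (Fintype.card ι : ℂ) := by
  rw [hsum_conj, mB4D1 x hx]; simp
lemma mD2B4 (hx : ∀ i, ∑ t, x i t * conj' (x i t) = 1) :
    hsum (fun s t s' t' => dl s t' * dl t s') (fun s t s' t' => Amat x t s' * dl s t')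
    = (Fintype.card κ : ℂ) * (Fintype.card ι : ℂ) := by
  rw [hsum_conj, mB4D2 x hx]; simp

lemma mB1y (hx : ∀ i, ∑ t, x i t * conj' (x i t) = 1) :
    hsum (fun s t s' t' => Amat x s s' * dl t t') (fun s t s' t' => Yt x s t s' t') = S1 x := by
  rw [hsum_conj, yB1 x hx, conj_S1]
lemma mB2y (hx : ∀ i, ∑ t, x i t * conj' (x i t) = 1) :
    hsum (fun s t s' t' => Amat x t t' * dl s s') (fun s t s' t' => Yt x s t s' t') = S1 x := by
  rw [hsum_conj, yB2 x hx, conj_S1]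
lemma mB3y (hx : ∀ i, ∑ t, x i t * conj' (x i t) = 1) :
    hsum (fun s t s' t' => Amat x s t' * dl t s') (fun s t s' t' => Yt x s t s' t') = S1 x := by
  rw [hsum_conj, yB3 x hx, conj_S1]
lemma mB4y (hx : ∀ i, ∑ t, x i t * conj' (x i t) = 1) :
    hsum (fun s t s' t' => Amat x t s' * dl s t') (fun s t s' t' => Yt x s t s' t') = S1 x := by
  rw [hsum_conj, yB4 x hx, conj_S1]
lemma mD1y (hx : ∀ i, ∑ t, x i t * conj' (x i t) = 1) :
    hsum (fun s t s' t' => dl s s' * dl t t') (fun s t s' t' => Yt x s t s' t')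
    = (Fintype.card ι : ℂ) := by
  rw [hsum_conj, yD1 x hx]; simp
lemma mD2y (hx : ∀ i, ∑ t, x i t * conj' (x i t) = 1) :
    hsum (fun s t s' t' => dl s t' * dl t s') (fun s t s' t' => Yt x s t s' t')
    = (Fintype.card ι : ℂ) := by
  rw [hsum_conj, yD2 x hx]; simp

-- expansion helpers
lemma expand4r (f : κ → κ → κ → κ → ℂ) (b1 b2 b3 b4 : κ → κ → κ → κ → ℂ) :
    hsum f (fun s t s' t' => b1 s t s' t' + b2 s t s' t' + b3 s t s' t' + b4 s t s' t')
    = hsum f b1 + hsum f b2 + hsum f b3 + hsum f b4 := by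
  simp only [hsum, map_add, mul_add, Finset.sum_add_distrib]
lemma expand4l (f : κ → κ → κ → κ → ℂ) (b1 b2 b3 b4 : κ → κ → κ → κ → ℂ) :
    hsum (fun s t s' t' => b1 s t s' t' + b2 s t s' t' + b3 s t s' t' + b4 s t s' t') f
    = hsum b1 f + hsum b2 f + hsum b3 f + hsum b4 f := by
  simp only [hsum, add_mul, Finset.sum_add_distrib]
lemma expand2r (f : κ → κ → κ → κ → ℂ) (b1 b2 : κ → κ → κ → κ → ℂ) :
    hsum f (fun s t s' t' => b1 s t s' t' + b2 s t s' t') = hsum f b1 + hsum f b2 := by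
  simp only [hsum, map_add, mul_add, Finset.sum_add_distrib]
lemma expand2l (f : κ → κ → κ → κ → ℂ) (b1 b2 : κ → κ → κ → κ → ℂ) :
    hsum (fun s t s' t' => b1 s t s' t' + b2 s t s' t') f = hsum b1 f + hsum b2 f := by
  simp only [hsum, add_mul, Finset.sum_add_distrib]

end core5
section core6
set_option linter.unusedSectionVars false
variable {ι κ : Type*} [Fintype ι] [Fintype κ] [DecidableEq κ] (x : ι → κ → ℂ)

lemma hYB (hx : ∀ i, ∑ t, x i t * conj' (x i t) = 1) :
    hsum (fun s t s' t' => Yt x s t s' t') (fun s t s' t' => Amat x s s' * dl t t' + Amat x t t' * dl s s' + Amat x s t' * dl t s' + Amat x t s' * dl s t') = 4 * S1 x := by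
  rw [expand4r, yB1 x hx, yB2 x hx, yB3 x hx, yB4 x hx]; ring

lemma hBY (hx : ∀ i, ∑ t, x i t * conj' (x i t) = 1) :
    hsum (fun s t s' t' => Amat x s s' * dl t t' + Amat x t t' * dl s s' + Amat x s t' * dl t s' + Amat x t s' * dl s t') (fun s t s' t' => Yt x s t s' t') = 4 * S1 x := by
  rw [expand4l, mB1y x hx, mB2y x hx, mB3y x hx, mB4y x hx]; ring

lemma hYD (hx : ∀ i, ∑ t, x i t * conj' (x i t) = 1) :
    hsum (fun s t s' t' => Yt x s t s' t') (fun s t s' t' : κ => dl s s' * dl t t' + dl s t' * dl t s') = 2 * (Fintype.card ι : ℂ) := by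
  rw [expand2r, yD1 x hx, yD2 x hx]; ring

lemma hDY (hx : ∀ i, ∑ t, x i t * conj' (x i t) = 1) :
    hsum (fun s t s' t' : κ => dl s s' * dl t t' + dl s t' * dl t s') (fun s t s' t' => Yt x s t s' t') = 2 * (Fintype.card ι : ℂ) := by
  rw [expand2l, mD1y x hx, mD2y x hx]; ring

lemma hBB (hx : ∀ i, ∑ t, x i t * conj' (x i t) = 1) :
    hsum (fun s t s' t' => Amat x s s' * dl t t' + Amat x t t' * dl s s' + Amat x s t' * dl t s' + Amat x t s' * dl s t') (fun s t s' t' => Amat x s s' * dl t t' + Amat x t t' * dl s s' + Amat x s t' * dl t s' + Amat x t s' * dl s t')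
    = 4 * ((Fintype.card κ : ℂ) + 2) * S1 x + 4 * (Fintype.card ι : ℂ)^2 := by
  rw [expand4l, expand4r, expand4r, expand4r, expand4r,
    mB11 x, mB12 x hx, mB13 x, mB14 x, mB21 x hx, mB22 x, mB23 x, mB24 x,
    mB31x x, mB32x x, mB33 x, mB34 x hx, mB41x x, mB42x x, mB43 x hx, mB44 x]
  ring

lemma hBD (hx : ∀ i, ∑ t, x i t * conj' (x i t) = 1) :
    hsum (fun s t s' t' => Amat x s s' * dl t t' + Amat x t t' * dl s s' + Amat x s t' * dl t s' + Amat x t s' * dl s t') (fun s t s' t' : κ => dl s s' * dl t t' + dl s t' * dl t s')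
    = 4 * ((Fintype.card κ : ℂ) + 1) * (Fintype.card ι : ℂ) := by
  rw [expand4l, expand2r, expand2r, expand2r, expand2r,
    mB1D1 x hx, mB1D2 x hx, mB2D1 x hx, mB2D2 x hx, mB3D1 x hx, mB3D2 x hx,
    mB4D1 x hx, mB4D2 x hx]
  ring

lemma hDB (hx : ∀ i, ∑ t, x i t * conj' (x i t) = 1) :
    hsum (fun s t s' t' : κ => dl s s' * dl t t' + dl s t' * dl t s') (fun s t s' t' => Amat x s s' * dl t t' + Amat x t t' * dl s s' + Amat x s t' * dl t s' + Amat x t s' * dl s t')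
    = 4 * ((Fintype.card κ : ℂ) + 1) * (Fintype.card ι : ℂ) := by
  rw [expand2l, expand4r, expand4r,
    mD1B1 x hx, mD1B2 x hx, mD1B3 x hx, mD1B4 x hx,
    mD2B1 x hx, mD2B2 x hx, mD2B3 x hx, mD2B4 x hx]
  ring

lemma hDD : hsum (fun s t s' t' : κ => dl s s' * dl t t' + dl s t' * dl t s') (fun s t s' t' : κ => dl s s' * dl t t' + dl s t' * dl t s')
    = 2 * (Fintype.card κ : ℂ)^2 + 2 * (Fintype.card κ : ℂ) := by
  rw [expand2l, expand2r, expand2r, mD1D1 (κ := κ), mD1D2 (κ := κ), mD2D1 (κ := κ), mD2D2 (κ := κ)]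
  ring

end core6
section core7
set_option linter.unusedSectionVars false
variable {ι κ : Type*} [Fintype ι] [Fintype κ] [DecidableEq κ] (x : ι → κ → ℂ)

lemma hsum_comb3 (a b c : ℂ) (f g h : κ → κ → κ → κ → ℂ) :
    hsum (fun s t s' t' => a * f s t s' t' + b * g s t s' t' + c * h s t s' t')
         (fun s t s' t' => a * f s t s' t' + b * g s t s' t' + c * h s t s' t')
    = a * conj' a * hsum f f + a * conj' b * hsum f g + a * conj' c * hsum f h
    + b * conj' a * hsum g f + b * conj' b * hsum g g + b * conj' c * hsum g h
    + c * conj' a * hsum h f + c * conj' b * hsum h g + c * conj' c * hsum h h := by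
  simp only [hsum, Finset.mul_sum, ← Finset.sum_add_distrib]
  refine Finset.sum_congr rfl fun s _ => Finset.sum_congr rfl fun t _ =>
    Finset.sum_congr rfl fun s' _ => Finset.sum_congr rfl fun t' _ => ?_
  simp only [map_add, map_mul]
  ring

lemma S1_cast : S1 x = ((∑ i, ∑ j, Complex.normSq (cc x i j) : ℝ) : ℂ) := by
  simp only [S1, Complex.mul_conj]
  push_cast
  rfl

lemma S2_cast : S2 x = ((∑ i, ∑ j, Complex.normSq (cc x i j) ^ 2 : ℝ) : ℂ) := by
  simp only [S2, Complex.mul_conj]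
  push_cast
  rfl

lemma Amat_diag (s : κ) : Amat x s s = ((∑ i, Complex.normSq (x i s) : ℝ) : ℂ) := by
  simp only [Amat, Complex.mul_conj]
  push_cast
  rfl

lemma claimC_real (hx : ∀ i, ∑ t, x i t * conj' (x i t) = 1) :
    4 * ((Fintype.card κ : ℝ) + 1) * (∑ i, ∑ j, Complex.normSq (cc x i j))
      - 2 * (Fintype.card ι : ℝ)^2
    ≤ ((Fintype.card κ : ℝ) + 1) * ((Fintype.card κ : ℝ) + 2) *
        (∑ i, ∑ j, Complex.normSq (cc x i j) ^ 2) := by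
  set nk : ℂ := (Fintype.card κ : ℂ) with hnk
  set Nc : ℂ := (Fintype.card ι : ℂ) with hNc
  have hK := hsum_comb3 (κ := κ) ((nk+1)*(nk+2)) (-(nk+1)) Nc
    (fun s t s' t' => Yt x s t s' t')
    (fun s t s' t' => Amat x s s' * dl t t' + Amat x t t' * dl s s'
       + Amat x s t' * dl t s' + Amat x t s' * dl s t')
    (fun s t s' t' => dl s s' * dl t t' + dl s t' * dl t s')
  rw [yy x, hYB x hx, hYD x hx, hBY x hx, hBB x hx, hBD x hx, hDY x hx, hDB x hx, hDD] at hK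
  have hconj1 : conj' ((nk+1)*(nk+2)) = (nk+1)*(nk+2) := by
    simp [hnk, map_mul, map_add, map_ofNat, Complex.conj_natCast]
  have hconj2 : conj' (-(nk+1)) = -(nk+1) := by
    simp [hnk, map_add, Complex.conj_natCast]
  have hconj3 : conj' Nc = Nc := by simp [hNc, Complex.conj_natCast]
  rw [hconj1, hconj2, hconj3] at hK
  set Kf : κ → κ → κ → κ → ℂ := (fun s t s' t' =>
    (nk+1)*(nk+2) * Yt x s t s' t'
    + (-(nk+1)) * (Amat x s s' * dl t t' + Amat x t t' * dl s s'
       + Amat x s t' * dl t s' + Amat x t s' * dl s t')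
    + Nc * (dl s s' * dl t t' + dl s t' * dl t s')) with hKf
  have hself := hsum_self Kf
  set r : ℝ := ∑ s, ∑ t, ∑ s', ∑ t', Complex.normSq (Kf s t s' t') with hr
  have hr0 : 0 ≤ r := by
    refine Finset.sum_nonneg fun s _ => Finset.sum_nonneg fun t _ =>
      Finset.sum_nonneg fun s' _ => Finset.sum_nonneg fun t' _ => Complex.normSq_nonneg _
  set S1r : ℝ := ∑ i, ∑ j, Complex.normSq (cc x i j) with hS1r
  set S2r : ℝ := ∑ i, ∑ j, Complex.normSq (cc x i j) ^ 2 with hS2r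
  have hcomplex : ((((Fintype.card κ : ℝ)+1)*((Fintype.card κ : ℝ)+2)
      * (((Fintype.card κ : ℝ)+1)*((Fintype.card κ : ℝ)+2) * S2r
        - 4*((Fintype.card κ : ℝ)+1)*S1r + 2*(Fintype.card ι : ℝ)^2) : ℝ) : ℂ) = (r : ℂ) := by
    rw [← hself, hK, S1_cast x, S2_cast x, ← hS1r, ← hS2r]
    push_cast [hnk, hNc]
    ring
  have hreal : ((Fintype.card κ : ℝ)+1)*((Fintype.card κ : ℝ)+2)
      * (((Fintype.card κ : ℝ)+1)*((Fintype.card κ : ℝ)+2) * S2r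
        - 4*((Fintype.card κ : ℝ)+1)*S1r + 2*(Fintype.card ι : ℝ)^2) = r :=
    Complex.ofReal_inj.mp hcomplex
  have hPpos : (0:ℝ) < ((Fintype.card κ : ℝ)+1)*((Fintype.card κ : ℝ)+2) := by positivity
  nlinarith [hr0, hreal, hPpos]

lemma welch1_real (hx : ∀ i, ∑ t, x i t * conj' (x i t) = 1) :
    (Fintype.card ι : ℝ)^2 ≤ (Fintype.card κ : ℝ) * ∑ i, ∑ j, Complex.normSq (cc x i j) := by
  have hdiag : ∀ s, Complex.normSq (Amat x s s) = (∑ i, Complex.normSq (x i s)) ^ 2 := by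
    intro s
    rw [Amat_diag x s, Complex.normSq_ofReal, sq]
  have htr : ∑ s, (∑ i, Complex.normSq (x i s)) = (Fintype.card ι : ℝ) := by
    have h2 : ((∑ s, ∑ i, Complex.normSq (x i s) : ℝ) : ℂ) = ((Fintype.card ι : ℝ) : ℂ) := by
      calc ((∑ s, ∑ i, Complex.normSq (x i s) : ℝ) : ℂ)
          = ∑ s, ((∑ i, Complex.normSq (x i s) : ℝ) : ℂ) := by push_cast; rfl
        _ = ∑ s, Amat x s s := Finset.sum_congr rfl fun s _ => (Amat_diag x s).symm
        _ = (Fintype.card ι : ℂ) := trA x hx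
        _ = ((Fintype.card ι : ℝ) : ℂ) := by push_cast; rfl
    exact Complex.ofReal_inj.mp h2
  have hS1 : ∑ s, ∑ t, Complex.normSq (Amat x s t) = ∑ i, ∑ j, Complex.normSq (cc x i j) := by
    have h2 : ((∑ s, ∑ t, Complex.normSq (Amat x s t) : ℝ) : ℂ)
        = ((∑ i, ∑ j, Complex.normSq (cc x i j) : ℝ) : ℂ) := by
      calc ((∑ s, ∑ t, Complex.normSq (Amat x s t) : ℝ) : ℂ)
          = ∑ s, ∑ t, ((Complex.normSq (Amat x s t) : ℝ) : ℂ) := by push_cast; rfl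
        _ = ∑ s, ∑ t, Amat x s t * conj' (Amat x s t) := Finset.sum_congr rfl fun s _ =>
            Finset.sum_congr rfl fun t _ => (Complex.mul_conj _).symm
        _ = S1 x := S1A x
        _ = ((∑ i, ∑ j, Complex.normSq (cc x i j) : ℝ) : ℂ) := S1_cast x
    exact Complex.ofReal_inj.mp h2
  have hCS : (∑ s : κ, (∑ i, Complex.normSq (x i s)))^2
      ≤ (Fintype.card κ : ℝ) * ∑ s : κ, (∑ i, Complex.normSq (x i s))^2 := by
    have := Finset.sum_mul_sq_le_sq_mul_sq Finset.univ (fun _ : κ => (1:ℝ))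
      (fun s => ∑ i, Complex.normSq (x i s))
    simpa [Finset.card_univ] using this
  have hdom : ∑ s : κ, Complex.normSq (Amat x s s) ≤ ∑ s, ∑ t, Complex.normSq (Amat x s t) := by
    refine Finset.sum_le_sum fun s _ => ?_
    exact Finset.single_le_sum (fun t _ => Complex.normSq_nonneg _) (Finset.mem_univ s)
  calc (Fintype.card ι : ℝ)^2 = (∑ s : κ, (∑ i, Complex.normSq (x i s)))^2 := by rw [htr]
    _ ≤ (Fintype.card κ : ℝ) * ∑ s : κ, (∑ i, Complex.normSq (x i s))^2 := hCS
    _ = (Fintype.card κ : ℝ) * ∑ s : κ, Complex.normSq (Amat x s s) := by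
        rw [Finset.sum_congr rfl fun s _ => (hdiag s).symm]
    _ ≤ (Fintype.card κ : ℝ) * ∑ s, ∑ t, Complex.normSq (Amat x s t) := by
        exact mul_le_mul_of_nonneg_left hdom (by positivity)
    _ = (Fintype.card κ : ℝ) * ∑ i, ∑ j, Complex.normSq (cc x i j) := by rw [hS1]

end core7
section core8
set_option linter.unusedSectionVars false

lemma levenstein_core {ι κ : Type*} [Fintype ι] [Fintype κ] [DecidableEq κ] (x : ι → κ → ℂ)
    (hx : ∀ i, ∑ t, x i t * conj' (x i t) = 1)
    (lam : ℝ) (hlam0 : 0 ≤ lam)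
    (hcross : ∀ i j, i ≠ j → ‖cc x i j‖ ≤ lam)
    (hk1 : 1 ≤ Fintype.card κ) (hcard : Fintype.card κ < Fintype.card ι) :
    2 * (Fintype.card ι : ℝ) - (Fintype.card κ : ℝ)^2 - (Fintype.card κ : ℝ)
      ≤ lam^2 * (((Fintype.card κ : ℝ) + 1) * ((Fintype.card ι : ℝ) - (Fintype.card κ : ℝ))) := by
  classical
  set nr : ℝ := (Fintype.card κ : ℝ) with hnr
  set Nr : ℝ := (Fintype.card ι : ℝ) with hNr
  set S1r : ℝ := ∑ i, ∑ j, Complex.normSq (cc x i j) with hS1r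
  set S2r : ℝ := ∑ i, ∑ j, Complex.normSq (cc x i j) ^ 2 with hS2r
  have hn1 : (1:ℝ) ≤ nr := by rw [hnr]; exact_mod_cast hk1
  have hNn : nr + 1 ≤ Nr := by rw [hnr, hNr]; exact_mod_cast hcard
  have f1 : Nr^2 ≤ nr * S1r := welch1_real x hx
  have f2 : 4 * (nr + 1) * S1r - 2 * Nr^2 ≤ (nr + 1) * (nr + 2) * S2r := claimC_real x hx
  -- f3 : S2r ≤ Nr + lam^2 * (S1r - Nr)
  have hdiagc : ∀ i, cc x i i = 1 := fun i => hx i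
  have htnn : ∀ i j, 0 ≤ Complex.normSq (cc x i j) := fun i j => Complex.normSq_nonneg _
  have hoff : ∀ i j, i ≠ j → Complex.normSq (cc x i j) ≤ lam^2 := by
    intro i j hij
    rw [← Complex.sq_norm]
    exact pow_le_pow_left₀ (norm_nonneg _) (hcross i j hij) 2
  have hsplit : ∀ (g : ι → ι → ℝ), (∑ i, ∑ j, g i j)
      = (∑ i, g i i) + ∑ i, ∑ j ∈ Finset.univ.erase i, g i j := by
    intro g
    rw [← Finset.sum_add_distrib]
    exact Finset.sum_congr rfl fun i _ =>
      (Finset.add_sum_erase Finset.univ (g i) (Finset.mem_univ i)).symm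
  have hdiagN : (∑ i : ι, Complex.normSq (cc x i i)) = Nr := by
    rw [hNr]
    simp [hdiagc, Finset.card_univ]
  have hdiagN2 : (∑ i : ι, Complex.normSq (cc x i i) ^ 2) = Nr := by
    rw [hNr]
    simp [hdiagc, Finset.card_univ]
  have f3 : S2r ≤ Nr + lam^2 * (S1r - Nr) := by
    have h1 : S1r = Nr + ∑ i, ∑ j ∈ Finset.univ.erase i, Complex.normSq (cc x i j) := by
      rw [hS1r, hsplit, hdiagN]
    have h2 : S2r = Nr + ∑ i, ∑ j ∈ Finset.univ.erase i, Complex.normSq (cc x i j) ^ 2 := by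
      rw [hS2r, hsplit, hdiagN2]
    have h3 : (∑ i, ∑ j ∈ Finset.univ.erase i, Complex.normSq (cc x i j) ^ 2)
        ≤ lam^2 * ∑ i, ∑ j ∈ Finset.univ.erase i, Complex.normSq (cc x i j) := by
      rw [Finset.mul_sum]
      refine Finset.sum_le_sum fun i _ => ?_
      rw [Finset.mul_sum]
      refine Finset.sum_le_sum fun j hj => ?_
      have hij : i ≠ j := fun h => (Finset.ne_of_mem_erase hj) h.symm
      have := hoff i j hij
      nlinarith [htnn i j]
    calc S2r = Nr + ∑ i, ∑ j ∈ Finset.univ.erase i, Complex.normSq (cc x i j) ^ 2 := h2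
      _ ≤ Nr + lam^2 * ∑ i, ∑ j ∈ Finset.univ.erase i, Complex.normSq (cc x i j) := by linarith
      _ = Nr + lam^2 * (S1r - Nr) := by rw [h1]; ring
  -- auxiliary positivity
  have hNpos : (0:ℝ) < Nr := by linarith
  have hnpos : (0:ℝ) < nr := by linarith
  have hDr : (0:ℝ) < Nr - nr := by linarith
  have hu0 : 0 ≤ S1r - Nr := by nlinarith
  by_cases hcase : 4 ≤ lam^2 * (nr + 2)
  · -- easy case
    have key : (nr + 2) * (2 * Nr - nr^2 - nr) ≤ (nr + 2) * (lam^2 * ((nr + 1) * (Nr - nr))) := by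
      have h : 0 ≤ (lam^2 * (nr + 2) - 4) * ((nr + 1) * (Nr - nr)) := by
        apply mul_nonneg (by linarith)
        apply mul_nonneg (by linarith) (by linarith)
      nlinarith [h, hn1, hNn]
    exact le_of_mul_le_mul_left key (by linarith)
  · push_neg at hcase
    set a : ℝ := lam^2 with ha
    set β : ℝ := 4 - a * (nr + 2) with hβ
    have hβpos : 0 < β := by rw [hβ]; linarith
    set u : ℝ := S1r - Nr with hu
    have c1 : (nr+1)*(nr+2)*S2r ≤ (nr+1)*(nr+2)*(Nr + a * u) := by
      have h0 : (0:ℝ) ≤ (nr+1)*(nr+2) := by nlinarith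
      exact mul_le_mul_of_nonneg_left f3 h0
    have hI := le_trans f2 c1
    have hidI : (nr+1)*β*u - Nr*((nr+1)*(nr+2) - 4*(nr+1) + 2*Nr)
        = (4*(nr+1)*S1r - 2*Nr^2) - ((nr+1)*(nr+2)*(Nr + a*u)) := by
      rw [hβ, hu]; ring
    have ineqI : (nr+1) * β * u ≤ Nr * ((nr+1)*(nr+2) - 4*(nr+1) + 2*Nr) := by
      linarith [hI, hidI]
    have hid2 : nr*u - Nr*(Nr-nr) = nr*S1r - Nr^2 := by rw [hu]; ring
    have ineqII : β * (Nr * (Nr - nr)) ≤ β * (nr * u) := by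
      apply mul_le_mul_of_nonneg_left _ (le_of_lt hβpos)
      linarith [f1, hid2]
    have h5 : nr * ((nr+1)*β*u) ≤ nr * (Nr * ((nr+1)*(nr+2) - 4*(nr+1) + 2*Nr)) :=
      mul_le_mul_of_nonneg_left ineqI (le_of_lt hnpos)
    have h6 : (nr+1) * (β * (Nr * (Nr - nr))) ≤ (nr+1) * (β * (nr * u)) :=
      mul_le_mul_of_nonneg_left ineqII (by linarith)
    have hidA : Nr * ((nr+1) * β * (Nr - nr)) = (nr+1) * (β * (Nr * (Nr - nr))) := by ring
    have hidB : (nr+1) * (β * (nr * u)) = nr * ((nr+1)*β*u) := by ring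
    have hidC : nr * (Nr * ((nr+1)*(nr+2) - 4*(nr+1) + 2*Nr))
        = Nr * (nr * ((nr+1)*(nr+2) - 4*(nr+1) + 2*Nr)) := by ring
    have E : Nr * ((nr+1) * β * (Nr - nr)) ≤ Nr * (nr * ((nr+1)*(nr+2) - 4*(nr+1) + 2*Nr)) := by
      linarith [h5, h6, hidA, hidB, hidC]
    have E' : (nr+1) * β * (Nr - nr) ≤ nr * ((nr+1)*(nr+2) - 4*(nr+1) + 2*Nr) :=
      le_of_mul_le_mul_left E hNpos
    have hidK : (nr+2)*(a*((nr+1)*(Nr-nr))) - (nr+2)*(2*Nr - nr^2 - nr)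
        = nr*((nr+1)*(nr+2) - 4*(nr+1) + 2*Nr) - (nr+1)*β*(Nr-nr) := by
      rw [hβ]; ring
    have key : (nr + 2) * (2 * Nr - nr^2 - nr) ≤ (nr + 2) * (a * ((nr + 1) * (Nr - nr))) := by
      linarith [E', hidK]
    have hfin := le_of_mul_le_mul_left key (by linarith : (0:ℝ) < nr + 2)
    linarith [hfin]

end core8
section bridge
variable (n : ℕ) [NeZero n]

lemma abs_phase (r : ℝ) : ‖Complex.exp (2 * Real.pi * Complex.I * (r:ℂ) / n)‖ = 1 := by
  have h : (2 * Real.pi * Complex.I * (r:ℂ) / n) = ((2 * Real.pi * r / n : ℝ) : ℂ) * Complex.I := by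
    push_cast; ring
  rw [h, Complex.norm_exp_ofReal_mul_I]

lemma conj_phase (r : ℝ) : conj' (Complex.exp (2 * Real.pi * Complex.I * (r:ℂ) / n))
    = Complex.exp (2 * Real.pi * Complex.I * ((-r : ℝ):ℂ) / n) := by
  rw [← Complex.exp_conj]
  congr 1
  simp only [map_div₀, map_mul, Complex.conj_I, Complex.conj_ofReal, Complex.conj_natCast,
    map_ofNat]
  push_cast
  ring

lemma mul_phase (r s : ℝ) : Complex.exp (2 * Real.pi * Complex.I * (r:ℂ) / n)
    * Complex.exp (2 * Real.pi * Complex.I * (s:ℂ) / n)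
    = Complex.exp (2 * Real.pi * Complex.I * ((r + s : ℝ):ℂ) / n) := by
  rw [← Complex.exp_add]
  congr 1
  push_cast
  ring

lemma exp_int_eq {a b : ℤ} (h : ((a : ZMod n) = (b : ZMod n))) :
    Complex.exp (2 * Real.pi * Complex.I * ((a : ℝ):ℂ) / n)
    = Complex.exp (2 * Real.pi * Complex.I * ((b : ℝ):ℂ) / n) := by
  have h' := (ZMod.intCast_eq_intCast_iff a b n).mp h
  obtain ⟨k, hk⟩ := Int.ModEq.dvd h'
  have hb : ((b:ℝ):ℂ) = ((a:ℝ):ℂ) + (n:ℂ) * (k:ℂ) := by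
    have : (b:ℤ) = a + n * k := by linarith [hk]
    rw [this]; push_cast; ring
  rw [hb]
  have hn : (n:ℂ) ≠ 0 := Nat.cast_ne_zero.mpr (NeZero.ne n)
  have harg : 2 * (Real.pi:ℂ) * Complex.I * (((a:ℝ):ℂ) + (n:ℂ)*(k:ℂ)) / n
      = 2 * (Real.pi:ℂ) * Complex.I * ((a:ℝ):ℂ) / n + (k:ℂ) * (2 * (Real.pi:ℂ) * Complex.I) := by
    field_simp
  rw [harg, Complex.exp_add, Complex.exp_int_mul_two_pi_mul_I, mul_one]

lemma ML_unit (w τ : ZMod n) (f : ZMod n → ℂ) (hf : ∑ t, f t * conj' (f t) = 1) :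
    ∑ t, ML n w τ f t * conj' (ML n w τ f t) = 1 := by
  have hpt : ∀ t, ML n w τ f t * conj' (ML n w τ f t) = f (t + τ) * conj' (f (t + τ)) := by
    intro t
    simp only [ML, map_mul]
    set r : ℝ := ((w.val * t.val : ℕ) : ℝ) with hr
    rw [conj_phase n r]
    have hEE : Complex.exp (2 * Real.pi * Complex.I * (r:ℂ) / n)
        * Complex.exp (2 * Real.pi * Complex.I * ((-r : ℝ):ℂ) / n) = 1 := by
      rw [mul_phase n]
      norm_num
    linear_combination (f (t + τ) * conj' (f (t + τ))) * hEE
  rw [Finset.sum_congr rfl fun t _ => hpt t]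
  rw [← Equiv.sum_comp (Equiv.addRight τ) (fun s => f s * conj' (f s))] at hf
  simpa using hf

lemma ML_abs_inner (f g : ZMod n → ℂ) (w τ w' τ' : ZMod n) :
    ‖∑ t, ML n w τ f t * conj' (ML n w' τ' g t)‖
      = ‖inn n f (ML n (w' - w) (τ' - τ) g)‖ := by
  set u : ZMod n := w' - w with hu
  set δ : ZMod n := τ' - τ with hδ
  set μ : ℂ := Complex.exp (2 * Real.pi * Complex.I * (((u.val * τ.val : ℕ) : ℝ):ℂ) / n) with hμ
  have key : ∑ t, ML n w τ f t * conj' (ML n w' τ' g t) = μ * inn n f (ML n u δ g) := by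
    rw [inn]
    rw [← Equiv.sum_comp (Equiv.addRight τ) (fun s => f s * conj' (ML n u δ g s))]
    rw [Finset.mul_sum]
    refine Finset.sum_congr rfl fun t _ => ?_
    have hco : (Equiv.addRight τ) t = t + τ := rfl
    rw [hco]
    simp only [ML, map_mul]
    have hτ : t + τ + δ = t + τ' := by rw [hδ]; ring
    rw [hτ]
    set r1 : ℝ := ((w.val * t.val : ℕ) : ℝ) with hr1
    set r2 : ℝ := ((w'.val * t.val : ℕ) : ℝ) with hr2
    set r3 : ℝ := ((u.val * τ.val : ℕ) : ℝ) with hr3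
    set r4 : ℝ := ((u.val * (t + τ).val : ℕ) : ℝ) with hr4
    rw [conj_phase n r2, conj_phase n r4]
    have hphase : Complex.exp (2 * Real.pi * Complex.I * (r1:ℂ) / n)
        * Complex.exp (2 * Real.pi * Complex.I * ((-r2 : ℝ):ℂ) / n)
        = Complex.exp (2 * Real.pi * Complex.I * (r3:ℂ) / n)
        * Complex.exp (2 * Real.pi * Complex.I * ((-r4 : ℝ):ℂ) / n) := by
      rw [mul_phase n, mul_phase n]
      have e1 : (r1 + -r2 : ℝ)
          = ((((w.val * t.val : ℕ) : ℤ) - ((w'.val * t.val : ℕ) : ℤ) : ℤ) : ℝ) := by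
        rw [hr1, hr2]; push_cast; ring
      have e2 : (r3 + -r4 : ℝ)
          = ((((u.val * τ.val : ℕ) : ℤ) - ((u.val * (t + τ).val : ℕ) : ℤ) : ℤ) : ℝ) := by
        rw [hr3, hr4]; push_cast; ring
      rw [e1, e2]
      apply exp_int_eq
      push_cast [ZMod.natCast_val, ZMod.intCast_cast, ZMod.cast_id]
      rw [hu]
      ring
    linear_combination (f (t + τ) * conj' (g (t + τ'))) * hphase
  rw [key, norm_mul]
  have habs : ‖μ‖ = 1 := by rw [hμ]; exact abs_phase n _
  rw [habs, one_mul]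

end bridge


theorem stmt_19 (n M : ℕ) [NeZero n] (hn : 1 < n) (hM : 1 < M)
    (φ : Fin M → ZMod n → ℂ) (hinj : Function.Injective φ)
    (hunit : ∀ j, IsUnitSignal n (φ j)) (lam : ℝ)
    (hlam : IsGreatest {r : ℝ | ∃ j j' : Fin M, ∃ w τ : ZMod n,
      (j ≠ j' ∨ (τ, w) ≠ (0, 0)) ∧ r = ‖inn n (φ j) (ML n w τ (φ j'))‖} lam)
    (hlt : lam < 1) :
    lam ≥ Real.sqrt ((2 * (n : ℝ) * M - n - 1) / (((n : ℝ) + 1) * ((n : ℝ) * M - 1))) := by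
  classical
  have hM0 : 0 < M := by omega
  haveI : NeZero M := ⟨by omega⟩
  set x : (Fin M × ZMod n × ZMod n) → ZMod n → ℂ :=
    fun p => ML n p.2.1 p.2.2 (φ p.1) with hxdef
  have hφc : ∀ j, ∑ t, φ j t * conj' (φ j t) = 1 := by
    intro j
    have h := hunit j
    calc ∑ t, φ j t * conj' (φ j t)
        = ∑ t, ((Complex.normSq (φ j t) : ℝ) : ℂ) :=
          Finset.sum_congr rfl fun t _ => Complex.mul_conj _
      _ = ((∑ t, Complex.normSq (φ j t) : ℝ) : ℂ) := by push_cast; rfl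
      _ = ((∑ t, ‖φ j t‖ ^ 2 : ℝ) : ℂ) := by
          norm_cast
          exact (Finset.sum_congr rfl fun t _ => (Complex.sq_norm _).symm)
      _ = 1 := by rw [h]; norm_num
  have hx : ∀ i, ∑ t, x i t * conj' (x i t) = 1 := fun p =>
    ML_unit n p.2.1 p.2.2 (φ p.1) (hφc p.1)
  have hlam0 : 0 ≤ lam := by
    obtain ⟨j, j', w, τ, hc, he⟩ := hlam.1
    rw [he]
    exact norm_nonneg _
  have hcross : ∀ i i', i ≠ i' → ‖cc x i i'‖ ≤ lam := by
    rintro ⟨j, w, τ⟩ ⟨j', w', τ'⟩ hne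
    have hcc : cc x (j, w, τ) (j', w', τ')
        = ∑ t, ML n w τ (φ j) t * conj' (ML n w' τ' (φ j') t) := rfl
    rw [hcc, ML_abs_inner n]
    apply hlam.2
    refine ⟨j, j', w' - w, τ' - τ, ?_, rfl⟩
    by_cases hj : j = j'
    · right
      subst hj
      intro hz
      have h1 := (Prod.mk.injEq _ _ _ _).mp hz
      have hτ : τ' = τ := by have := sub_eq_zero.mp h1.1; exact this
      have hw : w' = w := by have := sub_eq_zero.mp h1.2; exact this
      exact hne (by rw [hτ, hw])
    · exact Or.inl hj
  have hk1 : 1 ≤ Fintype.card (ZMod n) := by rw [ZMod.card]; omega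
  have hcardι : Fintype.card (Fin M × ZMod n × ZMod n) = M * (n * n) := by
    simp [Fintype.card_prod, ZMod.card, Fintype.card_fin]
  have hcard : Fintype.card (ZMod n) < Fintype.card (Fin M × ZMod n × ZMod n) := by
    rw [ZMod.card, hcardι]
    nlinarith
  have core := levenstein_core x hx lam hlam0 hcross hk1 hcard
  rw [ZMod.card, hcardι] at core
  push_cast at core
  set nn : ℝ := (n : ℝ) with hnn
  set Mm : ℝ := (M : ℝ) with hMm
  have hn2 : (2:ℝ) ≤ nn := by rw [hnn]; exact_mod_cast hn
  have hM2 : (2:ℝ) ≤ Mm := by rw [hMm]; exact_mod_cast hM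
  have hden : (0:ℝ) < (nn + 1) * (nn * Mm - 1) := by nlinarith
  have hT : (2 * nn * Mm - nn - 1) / ((nn + 1) * (nn * Mm - 1)) ≤ lam ^ 2 := by
    rw [div_le_iff₀ hden]
    have hfac : nn * (2 * nn * Mm - nn - 1) ≤ nn * (lam ^ 2 * ((nn + 1) * (nn * Mm - 1))) := by
      nlinarith [core]
    have := le_of_mul_le_mul_left (by
      calc nn * (2 * nn * Mm - nn - 1) ≤ nn * (lam ^ 2 * ((nn + 1) * (nn * Mm - 1))) := hfac) 
      (by linarith : (0:ℝ) < nn)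
    nlinarith [this]
  calc Real.sqrt ((2 * nn * Mm - nn - 1) / ((nn + 1) * (nn * Mm - 1)))
      ≤ Real.sqrt (lam ^ 2) := Real.sqrt_le_sqrt hT
    _ = lam := by rw [Real.sqrt_sq hlam0]
end
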